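/- arXiv:1810.01877 — 4 statements merged into one kernel-verified Lean document; each statement's English description precedes it below -/
import Mathlib

section
/- Let p ∈ [1,∞), q ∈ [1,∞], c, c_o > 0, k ≥ 0 an integer, and d = (d_0, d_1, …, d_{k+1}) with positive integer entries. If f : ℝ^{d_0} → ℝ^{d_{k+1}} is a ReLU network f = T_{k+1} ∘ σ ∘ T_k ∘ ⋯ ∘ σ ∘ T_1 (with T_i(u) = W_i^T u + B_i) of architecture d satisfying ‖T_i‖_{p,q} ≤ c for i = 1, …, k and ‖T_{k+1}‖_{p,q} ≤ c_o, then f ∈ N_{p,q,c,c_o}^{k,d}; that is, f is also representable by a ReLU network of the same architecture with ‖T_i‖_{p,q} = c exactly for i = 1, …, k and output layer norm at most c_o. -/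
open scoped BigOperators Classical ENNReal NNReal
open MeasureTheory

/-- ReLU activation. -/
noncomputable def relu (x : ℝ) : ℝ := max x 0

/-- Affine layer `u ↦ Ṽᵀ (1, u)` where the first row of `Ṽ` is the bias. -/
noncomputable def affineT {m n : ℕ} (V : Matrix (Fin (m + 1)) (Fin n) ℝ)
    (u : Fin m → ℝ) : Fin n → ℝ :=
  fun j => ∑ i, V i j * (Fin.cons (1 : ℝ) u : Fin (m + 1) → ℝ) i

/-- The `(j+1)`-layer map of a network: `T_{j+1} ∘ σ ∘ T_j ∘ ⋯ ∘ σ ∘ T_1`. -/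
noncomputable def netFun (d : ℕ → ℕ)
    (V : ∀ i : ℕ, Matrix (Fin (d i + 1)) (Fin (d (i + 1))) ℝ) :
    (j : ℕ) → (Fin (d 0) → ℝ) → (Fin (d (j + 1)) → ℝ)
  | 0 => fun x => affineT (V 0) x
  | (j + 1) => fun x => affineT (V (j + 1)) (fun i => relu (netFun d V j x i))

/-- `L_{p,q}` norm of a matrix, `q = ⊤` giving the sup over columns. -/
noncomputable def lpqNorm (p : ℝ) (q : ℝ≥0∞) {s1 s2 : ℕ}
    (A : Matrix (Fin s1) (Fin s2) ℝ) : ℝ :=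
  if q = ⊤ then ⨆ j : Fin s2, (∑ i, |A i j| ^ p) ^ (1 / p)
  else (∑ j, (∑ i, |A i j| ^ p) ^ (q.toReal / p)) ^ (1 / q.toReal)

/-- `1/q` with the convention `1/∞ = 0`. -/
noncomputable def qInv (q : ℝ≥0∞) : ℝ := if q = ⊤ then 0 else 1 / q.toReal

/-- The `ℓ_{p*}` norm, where `1/p + 1/p* = 1`, with `p* = ∞` when `p = 1`. -/
noncomputable def dualNorm (p : ℝ) {m : ℕ} (v : Fin m → ℝ) : ℝ :=
  if p = 1 then ⨆ j, |v j| else (∑ j, |v j| ^ (p / (p - 1))) ^ ((p - 1) / p)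

/-- The class `N_{p,q,c,c_o}^{k,d}` of `L_{p,q}` weight-normalized networks. -/
noncomputable def NNclass (p : ℝ) (q : ℝ≥0∞) (c co : ℝ) (k : ℕ) (d : ℕ → ℕ) :
    Set ((Fin (d 0) → ℝ) → (Fin (d (k + 1)) → ℝ)) :=
  {f | ∃ V : ∀ i : ℕ, Matrix (Fin (d i + 1)) (Fin (d (i + 1))) ℝ,
        f = netFun d V k ∧ (∀ i < k, lpqNorm p q (V i) = c) ∧ lpqNorm p q (V k) ≤ co}

/-- Scalar-valued version of `NNclass` (for networks with output width 1). -/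
noncomputable def scalarClass (p : ℝ) (q : ℝ≥0∞) (c co : ℝ) (k : ℕ) (d : ℕ → ℕ) :
    Set ((Fin (d 0) → ℝ) → ℝ) :=
  {f | ∃ g ∈ NNclass p q c co k d, ∀ x j, g x j = f x}

/-- Empirical Rademacher complexity of a class of real-valued functions. -/
noncomputable def empRad {X : Type*} {n : ℕ} (F : Set (X → ℝ)) (x : Fin n → X) : ℝ :=
  ((2 : ℝ) ^ n)⁻¹ * ∑ ε : Fin n → Bool,
    ⨆ f ∈ F, (n : ℝ)⁻¹ * ∑ i, (if ε i then (1 : ℝ) else -1) * f (x i)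

lemma lpqNorm_nonneg (p : ℝ) (q : ℝ≥0∞) {s1 s2 : ℕ}
    (A : Matrix (Fin s1) (Fin s2) ℝ) : 0 ≤ lpqNorm p q A := by
  unfold lpqNorm
  split
  · exact Real.iSup_nonneg fun j => Real.rpow_nonneg
      (Finset.sum_nonneg fun i _ => Real.rpow_nonneg (abs_nonneg _) _) _
  · exact Real.rpow_nonneg (Finset.sum_nonneg fun j _ => Real.rpow_nonneg
      (Finset.sum_nonneg fun i _ => Real.rpow_nonneg (abs_nonneg _) _) _) _

lemma eq_zero_of_lpqNorm_eq_zero {p : ℝ} (hp : 1 ≤ p) {q : ℝ≥0∞} (hq : 1 ≤ q)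
    {s1 s2 : ℕ} {A : Matrix (Fin s1) (Fin s2) ℝ} (h : lpqNorm p q A = 0) : A = 0 := by
  have hp0 : 0 < p := lt_of_lt_of_le one_pos hp
  have hS : ∀ j, (0:ℝ) ≤ ∑ i, |A i j| ^ p :=
    fun j => Finset.sum_nonneg fun i _ => Real.rpow_nonneg (abs_nonneg _) _
  have key : ∀ j, (∑ i, |A i j| ^ p) = 0 → ∀ i, A i j = 0 := by
    intro j hj i
    have := (Finset.sum_eq_zero_iff_of_nonneg
      (fun i _ => Real.rpow_nonneg (abs_nonneg _) _)).mp hj i (Finset.mem_univ i)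
    have := (Real.rpow_eq_zero (abs_nonneg _) (ne_of_gt hp0)).mp this
    simpa using this
  have hcol : ∀ j i, A i j = 0 := by
    intro j
    unfold lpqNorm at h
    split_ifs at h with hqt
    · have hb : BddAbove (Set.range fun j : Fin s2 => (∑ i, |A i j| ^ p) ^ (1 / p)) :=
        Finite.bddAbove_range _
      have hle : (∑ i, |A i j| ^ p) ^ (1 / p) ≤ 0 := h ▸ le_ciSup hb j
      have hge : (0:ℝ) ≤ (∑ i, |A i j| ^ p) ^ (1 / p) := Real.rpow_nonneg (hS j) _
      have : (∑ i, |A i j| ^ p) ^ (1 / p) = 0 := le_antisymm hle hge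
      have := (Real.rpow_eq_zero (hS j) (by positivity)).mp this
      exact key j this
    · have hq0 : 0 < q.toReal := by
        have := ENNReal.toReal_mono hqt hq
        simpa using lt_of_lt_of_le one_pos (by simpa using this)
      have hsum : (∑ j, (∑ i, |A i j| ^ p) ^ (q.toReal / p)) = 0 :=
        (Real.rpow_eq_zero (Finset.sum_nonneg fun j _ => Real.rpow_nonneg (hS j) _)
          (by positivity)).mp h
      have := (Finset.sum_eq_zero_iff_of_nonneg
        (fun j _ => Real.rpow_nonneg (hS j) _)).mp hsum j (Finset.mem_univ j)
      have := (Real.rpow_eq_zero (hS j) (by positivity)).mp this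
      exact key j this
  ext i j
  exact hcol j i

lemma lpqNorm_pos {p : ℝ} (hp : 1 ≤ p) {q : ℝ≥0∞} (hq : 1 ≤ q)
    {s1 s2 : ℕ} {A : Matrix (Fin s1) (Fin s2) ℝ} (h : A ≠ 0) : 0 < lpqNorm p q A :=
  lt_of_le_of_ne (lpqNorm_nonneg p q A)
    (fun e => h (eq_zero_of_lpqNorm_eq_zero hp hq e.symm))

lemma lpqNorm_smul {p : ℝ} (hp : 1 ≤ p) {q : ℝ≥0∞} (hq : 1 ≤ q)
    {s1 s2 : ℕ} (A : Matrix (Fin s1) (Fin s2) ℝ) {l : ℝ} (hl : 0 ≤ l) :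
    lpqNorm p q (fun i j => l * A i j) = l * lpqNorm p q A := by
  have hp0 : 0 < p := lt_of_lt_of_le one_pos hp
  have hS : ∀ j, (0:ℝ) ≤ ∑ i, |A i j| ^ p :=
    fun j => Finset.sum_nonneg fun i _ => Real.rpow_nonneg (abs_nonneg _) _
  have inner : ∀ j : Fin s2, (∑ i, |l * A i j| ^ p) = l ^ p * ∑ i, |A i j| ^ p := by
    intro j
    rw [Finset.mul_sum]
    refine Finset.sum_congr rfl fun i _ => ?_
    rw [abs_mul, abs_of_nonneg hl, Real.mul_rpow hl (abs_nonneg _)]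
  have hpow : ∀ S : ℝ, 0 ≤ S → ∀ e : ℝ, 0 ≤ e → (l ^ p * S) ^ e = (l ^ p) ^ e * S ^ e :=
    fun S hSn e _ => Real.mul_rpow (Real.rpow_nonneg hl _) hSn
  unfold lpqNorm
  split_ifs with hqt
  · have : ∀ j : Fin s2, (∑ i, |l * A i j| ^ p) ^ (1 / p)
        = l * (∑ i, |A i j| ^ p) ^ (1 / p) := by
      intro j
      rw [inner j, hpow _ (hS j) _ (by positivity), ← Real.rpow_mul hl,
        mul_one_div, div_self (ne_of_gt hp0), Real.rpow_one]
    simp_rw [this]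
    exact (Real.mul_iSup_of_nonneg hl _).symm
  · have hq0 : 0 < q.toReal := by
      have := ENNReal.toReal_mono hqt hq
      simpa using lt_of_lt_of_le one_pos (by simpa using this)
    have : ∀ j : Fin s2, (∑ i, |l * A i j| ^ p) ^ (q.toReal / p)
        = l ^ q.toReal * (∑ i, |A i j| ^ p) ^ (q.toReal / p) := by
      intro j
      rw [inner j, hpow _ (hS j) _ (by positivity), ← Real.rpow_mul hl]
      congr 2
      field_simp
    simp_rw [this, ← Finset.mul_sum]
    rw [Real.mul_rpow (Real.rpow_nonneg hl _)
      (Finset.sum_nonneg fun j _ => Real.rpow_nonneg (hS j) _),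
      ← Real.rpow_mul hl, mul_one_div, div_self (ne_of_gt hq0), Real.rpow_one]

lemma lpqNorm_mono {p : ℝ} (hp : 1 ≤ p) (q : ℝ≥0∞)
    {s1 s2 : ℕ} {A B : Matrix (Fin s1) (Fin s2) ℝ}
    (h : ∀ i j, |B i j| ≤ |A i j|) : lpqNorm p q B ≤ lpqNorm p q A := by
  have hp0 : 0 < p := lt_of_lt_of_le one_pos hp
  have hS : ∀ j, (∑ i, |B i j| ^ p) ≤ ∑ i, |A i j| ^ p :=
    fun j => Finset.sum_le_sum fun i _ =>
      Real.rpow_le_rpow (abs_nonneg _) (h i j) (le_of_lt hp0)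
  have hSn : ∀ j, (0:ℝ) ≤ ∑ i, |B i j| ^ p :=
    fun j => Finset.sum_nonneg fun i _ => Real.rpow_nonneg (abs_nonneg _) _
  unfold lpqNorm
  split_ifs with hqt
  · exact ciSup_mono (Finite.bddAbove_range _)
      fun j => Real.rpow_le_rpow (hSn j) (hS j) (by positivity)
  · refine Real.rpow_le_rpow (Finset.sum_nonneg fun j _ => Real.rpow_nonneg (hSn j) _)
      (Finset.sum_le_sum fun j _ => Real.rpow_le_rpow (hSn j) (hS j) (by positivity))
      (by positivity)

lemma affineT_apply {m n : ℕ} (V : Matrix (Fin (m + 1)) (Fin n) ℝ)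
    (u : Fin m → ℝ) (j : Fin n) :
    affineT V u j = V 0 j + ∑ i, V i.succ j * u i := by
  unfold affineT
  rw [Fin.sum_univ_succ]
  simp

lemma netFun_congr (d : ℕ → ℕ)
    (V W : ∀ i : ℕ, Matrix (Fin (d i + 1)) (Fin (d (i + 1))) ℝ) :
    ∀ j : ℕ, (∀ i ≤ j, V i = W i) → netFun d V j = netFun d W j := by
  intro j
  induction j with
  | zero => intro h; simp only [netFun, h 0 (le_refl 0)]
  | succ j ih =>
      intro h
      have h1 : netFun d V j = netFun d W j := ih fun i hi => h i (le_trans hi (Nat.le_succ j))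
      simp only [netFun, h1, h (j+1) (le_refl _)]

noncomputable def hiddenFun (d : ℕ → ℕ)
    (V : ∀ i : ℕ, Matrix (Fin (d i + 1)) (Fin (d (i + 1))) ℝ) :
    (j : ℕ) → (Fin (d 0) → ℝ) → (Fin (d j) → ℝ)
  | 0 => fun x => x
  | (j + 1) => fun x i => relu (netFun d V j x i)

lemma netFun_eq_affine (d : ℕ → ℕ)
    (V : ∀ i : ℕ, Matrix (Fin (d i + 1)) (Fin (d (i + 1))) ℝ) (j : ℕ)
    (x : Fin (d 0) → ℝ) :
    netFun d V j x = affineT (V j) (hiddenFun d V j x) := by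
  cases j <;> rfl

lemma hiddenFun_congr (d : ℕ → ℕ)
    (V W : ∀ i : ℕ, Matrix (Fin (d i + 1)) (Fin (d (i + 1))) ℝ) (j : ℕ)
    (h : ∀ i < j, V i = W i) : hiddenFun d V j = hiddenFun d W j := by
  cases j with
  | zero => rfl
  | succ j =>
      have : netFun d V j = netFun d W j :=
        netFun_congr d V W j fun i hi => h i (Nat.lt_succ_of_le hi)
      simp only [hiddenFun, this]

lemma relu_mul {l : ℝ} (hl : 0 ≤ l) (y : ℝ) : relu (l * y) = l * relu y := by
  unfold relu
  rw [mul_max_of_nonneg _ _ hl, mul_zero]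

lemma key_step {p : ℝ} (hp : 1 ≤ p) {q : ℝ≥0∞} (hq : 1 ≤ q) {c : ℝ} (hc : 0 < c)
    {m n n' : ℕ} (hn : 0 < n)
    (M : Matrix (Fin (m + 1)) (Fin n) ℝ) (W : Matrix (Fin (n + 1)) (Fin n') ℝ)
    (hM : lpqNorm p q M ≤ c) :
    ∃ (A : Matrix (Fin (m + 1)) (Fin n) ℝ) (W' : Matrix (Fin (n + 1)) (Fin n') ℝ),
      lpqNorm p q A = c ∧ (∀ i j, |W' i j| ≤ |W i j|) ∧
      ∀ u : Fin m → ℝ,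
        affineT W' (fun i => relu (affineT A u i)) =
          affineT W (fun i => relu (affineT M u i)) := by
  by_cases h0 : M = 0
  · -- degenerate case: replace M by a norm-c matrix, zero the weights of W
    set J : Matrix (Fin (m + 1)) (Fin n) ℝ := fun _ _ => 1 with hJ
    have hJ0 : J ≠ 0 := by
      intro h
      have := congrFun (congrFun h 0) ⟨0, hn⟩
      simp [hJ] at this
    have hN : 0 < lpqNorm p q J := lpqNorm_pos hp hq hJ0
    refine ⟨fun i j => (c / lpqNorm p q J) * J i j,
      fun i j => if i = 0 then W i j else 0, ?_, ?_, ?_⟩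
    · rw [lpqNorm_smul hp hq J (by positivity), div_mul_cancel₀ _ (ne_of_gt hN)]
    · intro i j
      by_cases hi : i = 0 <;> simp [hi]
    · intro u
      funext j
      erw [affineT_apply, affineT_apply]
      have hM0 : ∀ i, affineT M u i = 0 := by
        intro i
        unfold affineT
        simp [h0]
      simp [Fin.succ_ne_zero, hM0, relu]
  · -- scaling case
    set t := lpqNorm p q M with htdef
    have ht : 0 < t := lpqNorm_pos hp hq h0
    set l := c / t with hldef
    have hl0 : 0 < l := by positivity
    have hl1 : 1 ≤ l := (one_le_div ht).mpr hM
    refine ⟨fun i j => l * M i j,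
      fun i j => if i = 0 then W i j else l⁻¹ * W i j, ?_, ?_, ?_⟩
    · rw [lpqNorm_smul hp hq M hl0.le, ← htdef, hldef, div_mul_cancel₀ _ (ne_of_gt ht)]
    · intro i j
      by_cases hi : i = 0
      · simp [hi]
      · simp only [hi, if_false, abs_mul, abs_inv, abs_of_pos hl0]
        exact mul_le_of_le_one_left (abs_nonneg _) (inv_le_one_of_one_le₀ hl1)
    · intro u
      funext j
      erw [affineT_apply, affineT_apply]
      have hAu : ∀ i, affineT (fun i j => l * M i j) u i = l * affineT M u i := by
        intro i
        unfold affineT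
        rw [Finset.mul_sum]
        exact Finset.sum_congr rfl fun a _ => by ring
      simp only [hAu, relu_mul hl0.le, if_pos rfl, Fin.succ_ne_zero, if_false]
      congr 1
      refine Finset.sum_congr rfl fun i _ => ?_
      rw [show l⁻¹ * W i.succ j * (l * relu (affineT M u i))
          = (l⁻¹ * l) * (W i.succ j * relu (affineT M u i)) by ring,
        inv_mul_cancel₀ (ne_of_gt hl0), one_mul]

lemma key (p : ℝ) (hp : 1 ≤ p) (q : ℝ≥0∞) (hq : 1 ≤ q) (c : ℝ) (hc : 0 < c)
    (d : ℕ → ℕ) (hd : ∀ i, 0 < d i) :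
    ∀ (k : ℕ) (V : ∀ i : ℕ, Matrix (Fin (d i + 1)) (Fin (d (i + 1))) ℝ) (co : ℝ),
      (∀ i < k, lpqNorm p q (V i) ≤ c) → lpqNorm p q (V k) ≤ co →
      ∃ V' : ∀ i : ℕ, Matrix (Fin (d i + 1)) (Fin (d (i + 1))) ℝ,
        netFun d V' k = netFun d V k ∧ (∀ i < k, lpqNorm p q (V' i) = c) ∧
        lpqNorm p q (V' k) ≤ co := by
  intro k
  induction k with
  | zero =>
      intro V co hhid hlast
      exact ⟨V, rfl, fun i hi => absurd hi (Nat.not_lt_zero i), hlast⟩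
  | succ k ih =>
      intro V co hhid hlast
      obtain ⟨V₁, hf₁, hn₁, hk₁⟩ := ih V c
        (fun i hi => hhid i (Nat.lt_succ_of_lt hi)) (hhid k (Nat.lt_succ_self k))
      set V₂ : ∀ i : ℕ, Matrix (Fin (d i + 1)) (Fin (d (i + 1))) ℝ :=
        Function.update V₁ (k + 1) (V (k + 1)) with hV₂def
      have hV₂le : ∀ i ≤ k, V₂ i = V₁ i := by
        intro i hi
        exact Function.update_of_ne (by omega) _ _
      have hV₂succ : V₂ (k + 1) = V (k + 1) := Function.update_self _ _ _
      have hk₂ : lpqNorm p q (V₂ k) ≤ c := by rw [hV₂le k le_rfl]; exact hk₁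
      obtain ⟨A, W', hA, hW', hfun⟩ :=
        key_step hp hq hc (hd (k + 1)) (V₂ k) (V (k + 1)) hk₂
      set V₃ : ∀ i : ℕ, Matrix (Fin (d i + 1)) (Fin (d (i + 1))) ℝ :=
        Function.update (Function.update V₂ k A) (k + 1) W' with hV₃def
      have hV₃lt : ∀ i < k, V₃ i = V₂ i := by
        intro i hi
        rw [hV₃def, Function.update_of_ne (by omega), Function.update_of_ne (by omega)]
      have hV₃k : V₃ k = A := by
        rw [hV₃def, Function.update_of_ne (by omega), Function.update_self]
      have hV₃succ : V₃ (k + 1) = W' := Function.update_self _ _ _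
      have hnet₂ : netFun d V₂ k = netFun d V k := by
        rw [netFun_congr d V₂ V₁ k hV₂le, hf₁]
      refine ⟨V₃, ?_, ?_, ?_⟩
      · funext x
        have h3 : netFun d V₃ (k + 1) x
            = affineT W' (fun i => relu (affineT A (hiddenFun d V₂ k x) i)) := by
          show affineT (V₃ (k + 1)) (fun i => relu (netFun d V₃ k x i)) = _
          rw [hV₃succ]
          congr 1
          funext i
          rw [netFun_eq_affine, hV₃k, hiddenFun_congr d V₃ V₂ k hV₃lt]
        have h2 : netFun d V (k + 1) x
            = affineT (V (k + 1)) (fun i => relu (affineT (V₂ k) (hiddenFun d V₂ k x) i)) := by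
          show affineT (V (k + 1)) (fun i => relu (netFun d V k x i)) = _
          congr 1
          funext i
          rw [← hnet₂, netFun_eq_affine]
        rw [h3, h2, hfun]
      · intro i hi
        rcases Nat.lt_succ_iff_lt_or_eq.mp hi with hi | hi
        · rw [hV₃lt i hi, hV₂le i (le_of_lt hi)]
          exact hn₁ i hi
        · rw [hi, hV₃k]
          exact hA
      · rw [hV₃succ]
        exact le_trans (lpqNorm_mono hp q hW') hlast

/-- Theorem 1(a): a network whose hidden layers have `L_{p,q}` norm at most `c` and
output layer norm at most `c_o` belongs to `N_{p,q,c,c_o}^{k,d}`. -/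
theorem mem_NNclass_of_norm_le
    (p : ℝ) (hp : 1 ≤ p) (q : ℝ≥0∞) (hq : 1 ≤ q)
    (c co : ℝ) (hc : 0 < c) (hco : 0 < co)
    (k : ℕ) (d : ℕ → ℕ) (hd : ∀ i, 0 < d i)
    (V : ∀ i : ℕ, Matrix (Fin (d i + 1)) (Fin (d (i + 1))) ℝ)
    (hhid : ∀ i < k, lpqNorm p q (V i) ≤ c)
    (hlast : lpqNorm p q (V k) ≤ co) :
    netFun d V k ∈ NNclass p q c co k d := by
  obtain ⟨V', hf, hn, hl⟩ := key p hp q hq c hc d hd k V co hhid hlast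
  exact ⟨V', hf.symm, hn, hl⟩
end

section
/- Let p ∈ (1,2] and let p* satisfy 1/p + 1/p* = 1 (so p* ∈ [2,∞)). Let z_1, …, z_n ∈ ℝ^{m_1} with ‖z_i‖_∞ ≤ 1 for all i. Then (1/n)·2^{-n} Σ_{ε ∈ {-1,1}^n} ‖Σ_{i=1}^n ε_i z_i‖_{p*} ≤ (m_1^{1/p*}/√n) · min( √(p*−1), √(2·log(2m_1)) ). -/
open scoped BigOperators Classical ENNReal NNReal
open MeasureTheory

namespace RademacherVectorAux

open Finset


/-- double factorial (2k-1)!! -/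
def df : ℕ → ℕ
  | 0 => 1
  | (k+1) => (2*k+1) * df k

lemma df_pos (k : ℕ) : 0 < df k := by
  induction k with
  | zero => simp [df]
  | succ k ih => exact Nat.mul_pos (by omega) ih

lemma one_le_df (k : ℕ) : 1 ≤ df k := df_pos k

lemma two_pow_mul_factorial_le (m : ℕ) : 2 ^ m * m.factorial ≤ (2*m).factorial := by
  induction m with
  | zero => simp
  | succ m ih =>
    have h2 : 2*(m+1) = (2*m+1)+1 := by ring
    rw [h2, Nat.factorial_succ, Nat.factorial_succ]
    calc 2^(m+1) * ((m+1)*m.factorial) = (m+1) * (2 * (2^m * m.factorial)) := by ring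
    _ ≤ (m+1) * (2 * (2*m).factorial) := by
        exact Nat.mul_le_mul_left _ (Nat.mul_le_mul_left _ ih)
    _ ≤ ((2*m+1)+1) * ((2*m+1) * (2*m).factorial) := by
        have h3 : (m+1) * 2 ≤ (2*m+1)+1 := by omega
        have h4 : (2*m).factorial ≤ (2*m+1) * (2*m).factorial :=
          Nat.le_mul_of_pos_left _ (by omega)
        calc (m+1) * (2 * (2*m).factorial) = ((m+1)*2) * (2*m).factorial := by ring
        _ ≤ ((2*m+1)+1) * ((2*m+1) * (2*m).factorial) :=
          Nat.mul_le_mul h3 h4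

lemma df_mul_eq (k : ℕ) : df k * (2^k * k.factorial) = (2*k).factorial := by
  induction k with
  | zero => simp [df]
  | succ k ih =>
    have h2 : 2*(k+1) = (2*k+1)+1 := by ring
    rw [h2, Nat.factorial_succ (2*k+1), Nat.factorial_succ (2*k), Nat.factorial_succ k,
      show df (k+1) = (2*k+1) * df k from rfl, ← ih]
    ring

lemma coeff_le (i j : ℕ) :
    Nat.choose (2*(i+j)) (2*i) * df i ≤ df (i+j) * Nat.choose (i+j) i := by
  have h1 : Nat.choose (2*(i+j)) (2*i) * (2*i).factorial * (2*j).factorial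
      = (2*(i+j)).factorial := by
    have h := Nat.choose_mul_factorial_mul_factorial (show 2*i ≤ 2*(i+j) by omega)
    rw [show 2*(i+j) - 2*i = 2*j by omega] at h
    exact h
  have h2 : Nat.choose (i+j) i * i.factorial * j.factorial = (i+j).factorial := by
    have h := Nat.choose_mul_factorial_mul_factorial (show i ≤ i+j by omega)
    rw [show i+j-i = j by omega] at h
    exact h
  have key : 2^j * j.factorial ≤ (2*j).factorial := two_pow_mul_factorial_le j
  refine Nat.le_of_mul_le_mul_right ?_
    (show 0 < 2^(i+j) * (i.factorial * (j.factorial * (2*j).factorial)) by positivity)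
  · have e1 : Nat.choose (2*(i+j)) (2*i) * df i
        * (2^(i+j) * (i.factorial * (j.factorial * (2*j).factorial)))
        = (2*(i+j)).factorial * (2^j * j.factorial) := by
      calc Nat.choose (2*(i+j)) (2*i) * df i
            * (2^(i+j) * (i.factorial * (j.factorial * (2*j).factorial)))
          = (df i * (2^i * i.factorial)) * ((Nat.choose (2*(i+j)) (2*i) * (2*j).factorial)
              * (2^j * j.factorial)) := by rw [pow_add]; ring
        _ = (2*i).factorial * ((Nat.choose (2*(i+j)) (2*i) * (2*j).factorial)
              * (2^j * j.factorial)) := by rw [df_mul_eq]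
        _ = (Nat.choose (2*(i+j)) (2*i) * (2*i).factorial * (2*j).factorial)
              * (2^j * j.factorial) := by ring
        _ = (2*(i+j)).factorial * (2^j * j.factorial) := by rw [h1]
    have e2 : df (i+j) * Nat.choose (i+j) i
        * (2^(i+j) * (i.factorial * (j.factorial * (2*j).factorial)))
        = (2*(i+j)).factorial * (2*j).factorial := by
      calc df (i+j) * Nat.choose (i+j) i
            * (2^(i+j) * (i.factorial * (j.factorial * (2*j).factorial)))
          = (df (i+j) * (2^(i+j) * ((Nat.choose (i+j) i * i.factorial * j.factorial))))
              * (2*j).factorial := by ring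
        _ = (df (i+j) * (2^(i+j) * (i+j).factorial)) * (2*j).factorial := by rw [h2]
        _ = (2*(i+j)).factorial * (2*j).factorial := by rw [df_mul_eq]
    rw [e1, e2]
    exact Nat.mul_le_mul_left _ key

lemma df_le_pow (k : ℕ) : df (k+1) ≤ (2*k+1)^k := by
  induction k with
  | zero => simp [df]
  | succ k ih =>
    calc df (k+2) = (2*(k+1)+1) * df (k+1) := rfl
    _ ≤ (2*(k+1)+1) * (2*k+1)^k := Nat.mul_le_mul_left _ ih
    _ ≤ (2*(k+1)+1) * (2*(k+1)+1)^k :=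
        Nat.mul_le_mul_left _ (Nat.pow_le_pow_left (by omega) k)
    _ = (2*(k+1)+1)^(k+1) := by rw [pow_succ]; ring


open Finset

lemma sum_split {n : ℕ} (F : (Fin (n+1) → Bool) → ℝ) :
    ∑ ε : Fin (n+1) → Bool, F ε
      = ∑ ε : Fin n → Bool, (F (Fin.cons true ε) + F (Fin.cons false ε)) := by
  rw [← Equiv.sum_comp (Fin.consEquiv fun _ => Bool) F, Fintype.sum_prod_type,
    Fintype.sum_bool, ← Finset.sum_add_distrib]
  rfl

lemma even_moment : ∀ (n : ℕ) (a : Fin n → ℝ) (k : ℕ),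
    ∑ ε : Fin n → Bool, (∑ i, (if ε i then (1:ℝ) else -1) * a i) ^ (2*k)
      ≤ 2^n * ((df k : ℝ) * (∑ i, (a i)^2) ^ k) := by
  intro n
  induction n with
  | zero =>
    intro a k
    have h0 : ∀ ε : Fin 0 → Bool, (∑ i, (if ε i then (1:ℝ) else -1) * a i) ^ (2*k)
        = (0:ℝ)^(2*k) := by intro ε; simp
    rw [Finset.sum_congr rfl (fun ε _ => h0 ε), Finset.sum_const]
    have hcard : (Finset.univ : Finset (Fin 0 → Bool)).card = 1 := by
      simp [Fintype.card_fun]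
    rw [hcard, one_smul]
    have hs : (∑ i : Fin 0, (a i)^2) = 0 := by simp
    rw [hs]
    rcases Nat.eq_zero_or_pos k with hk | hk
    · subst hk; norm_num [df]
    · rw [zero_pow (by omega), zero_pow (by omega)]
      have : (1:ℝ) ≤ (df k : ℝ) := by exact_mod_cast df_pos k
      nlinarith
  | succ n ih =>
    intro a k
    rw [sum_split]
    set c := a 0 with hc
    set b : Fin n → ℝ := fun i => a i.succ with hb
    set T : (Fin n → Bool) → ℝ := fun ε => ∑ i, (if ε i then (1:ℝ) else -1) * b i with hT
    set σ : ℝ := ∑ i, (b i)^2 with hσ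
    have hσ0 : 0 ≤ σ := by positivity
    have hTnn : ∀ m : ℕ, 0 ≤ ∑ ε : Fin n → Bool, T ε ^ (2*m) := by
      intro m; apply Finset.sum_nonneg; intro ε _
      exact (even_two_mul m).pow_nonneg _
    have hsum : ∀ (s : Bool) (ε : Fin n → Bool),
        (∑ i : Fin (n+1), (if (Fin.cons s ε : Fin (n+1) → Bool) i then (1:ℝ) else -1) * a i)
          = T ε + (if s then (1:ℝ) else -1) * c := by
      intro s ε
      rw [Fin.sum_univ_succ]
      simp only [Fin.cons_zero, Fin.cons_succ]
      rw [add_comm]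
    -- pointwise binomial identity
    have point : ∀ ε : Fin n → Bool,
        (T ε + c) ^ (2*k) + (T ε + -c) ^ (2*k)
          = ∑ m ∈ range (2*k+1),
              (T ε ^ m * (c ^ (2*k-m) + (-c) ^ (2*k-m)) * (Nat.choose (2*k) m : ℝ)) := by
      intro ε
      rw [add_pow, add_pow, ← Finset.sum_add_distrib]
      apply Finset.sum_congr rfl
      intro m _
      ring
    have step1 : ∑ ε : Fin n → Bool,
          ((T ε + c) ^ (2*k) + (T ε + -c) ^ (2*k))
        = ∑ m ∈ range (2*k+1),
            ((c ^ (2*k-m) + (-c) ^ (2*k-m)) * (Nat.choose (2*k) m : ℝ)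
              * ∑ ε : Fin n → Bool, T ε ^ m) := by
      rw [Finset.sum_congr rfl (fun ε _ => point ε), Finset.sum_comm]
      apply Finset.sum_congr rfl
      intro m _
      rw [Finset.mul_sum]
      apply Finset.sum_congr rfl
      intro ε _
      ring
    -- restrict to even m
    have hzero : ∀ m ∈ range (2*k+1), m ∉ (range (k+1)).image (fun i => 2*i) →
        ((c ^ (2*k-m) + (-c) ^ (2*k-m)) * (Nat.choose (2*k) m : ℝ)
          * ∑ ε : Fin n → Bool, T ε ^ m) = 0 := by
      intro m hm hnot
      have hmle : m ≤ 2*k := by simpa using Nat.lt_succ_iff.mp (Finset.mem_range.mp hm)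
      have hodd : Odd (2*k - m) := by
        rcases Nat.even_or_odd m with he | ho
        · exfalso
          obtain ⟨i, rfl⟩ := he
          exact hnot (Finset.mem_image.mpr ⟨i, Finset.mem_range.mpr (by omega), by omega⟩)
        · exact Nat.Even.sub_odd hmle ⟨k, by ring⟩ ho
      rw [hodd.neg_pow]
      ring
    have hsub : (range (k+1)).image (fun i => 2*i) ⊆ range (2*k+1) := by
      intro m hm
      obtain ⟨i, hi, rfl⟩ := Finset.mem_image.mp hm
      exact Finset.mem_range.mpr (by have := Finset.mem_range.mp hi; omega)
    have step2 : ∑ m ∈ range (2*k+1),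
            ((c ^ (2*k-m) + (-c) ^ (2*k-m)) * (Nat.choose (2*k) m : ℝ)
              * ∑ ε : Fin n → Bool, T ε ^ m)
        = ∑ i ∈ range (k+1),
            (2 * c ^ (2*(k-i)) * (Nat.choose (2*k) (2*i) : ℝ)
              * ∑ ε : Fin n → Bool, T ε ^ (2*i)) := by
      rw [← Finset.sum_subset hsub (by intro m hm hnot; exact hzero m hm hnot)]
      rw [Finset.sum_image (by intro x _ y _ h; simp only at h; omega)]
      apply Finset.sum_congr rfl
      intro i hi
      have hik : i ≤ k := Nat.lt_succ_iff.mp (Finset.mem_range.mp hi)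
      have h1 : 2*k - 2*i = 2*(k-i) := by omega
      rw [h1, (even_two_mul (k-i)).neg_pow]
      ring
    -- bound each term
    have step3 : ∀ i ∈ range (k+1),
        (2 * c ^ (2*(k-i)) * (Nat.choose (2*k) (2*i) : ℝ)
          * ∑ ε : Fin n → Bool, T ε ^ (2*i))
        ≤ 2^(n+1) * ((df k : ℝ) * ((Nat.choose k i : ℝ) * σ^i * (c^2)^(k-i))) := by
      intro i hi
      have hik : i ≤ k := Nat.lt_succ_iff.mp (Finset.mem_range.mp hi)
      have hcnn : (0:ℝ) ≤ c ^ (2*(k-i)) := (even_two_mul _).pow_nonneg _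
      have h1 : 2 * c ^ (2*(k-i)) * (Nat.choose (2*k) (2*i) : ℝ)
            * ∑ ε : Fin n → Bool, T ε ^ (2*i)
          ≤ 2 * c ^ (2*(k-i)) * (Nat.choose (2*k) (2*i) : ℝ)
            * (2^n * ((df i : ℝ) * σ^i)) := by
        apply mul_le_mul_of_nonneg_left (ih b i)
        positivity
      refine h1.trans ?_
      have h2 : (Nat.choose (2*k) (2*i) : ℝ) * (df i : ℝ) ≤ (df k : ℝ) * (Nat.choose k i : ℝ) := by
        have := coeff_le i (k-i)
        rw [show i + (k-i) = k by omega] at this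
        exact_mod_cast this
      have h3 : c ^ (2*(k-i)) = (c^2)^(k-i) := by rw [← pow_mul]
      calc 2 * c ^ (2*(k-i)) * (Nat.choose (2*k) (2*i) : ℝ) * (2^n * ((df i : ℝ) * σ^i))
          = (2^(n+1) * c ^ (2*(k-i)) * σ^i) * ((Nat.choose (2*k) (2*i) : ℝ) * (df i : ℝ)) := by
            ring
        _ ≤ (2^(n+1) * c ^ (2*(k-i)) * σ^i) * ((df k : ℝ) * (Nat.choose k i : ℝ)) := by
            apply mul_le_mul_of_nonneg_left h2
            positivity
        _ = 2^(n+1) * ((df k : ℝ) * ((Nat.choose k i : ℝ) * σ^i * (c^2)^(k-i))) := by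
            rw [h3]; ring
    -- assemble
    have hsplit : ∀ ε : Fin n → Bool,
        (∑ i : Fin (n+1), (if (Fin.cons true ε : Fin (n+1) → Bool) i then (1:ℝ) else -1) * a i)
            ^ (2*k)
          + (∑ i : Fin (n+1), (if (Fin.cons false ε : Fin (n+1) → Bool) i then (1:ℝ) else -1)
              * a i) ^ (2*k)
        = (T ε + c) ^ (2*k) + (T ε + -c) ^ (2*k) := by
      intro ε
      rw [hsum true ε, hsum false ε]
      norm_num
    rw [Finset.sum_congr rfl (fun ε _ => hsplit ε), step1, step2]
    have hfin : (∑ i : Fin (n+1), (a i)^2) = c^2 + σ := by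
      rw [Fin.sum_univ_succ]
    rw [hfin]
    calc ∑ i ∈ range (k+1),
            (2 * c ^ (2*(k-i)) * (Nat.choose (2*k) (2*i) : ℝ)
              * ∑ ε : Fin n → Bool, T ε ^ (2*i))
        ≤ ∑ i ∈ range (k+1),
            2^(n+1) * ((df k : ℝ) * ((Nat.choose k i : ℝ) * σ^i * (c^2)^(k-i))) :=
          Finset.sum_le_sum step3
      _ = 2^(n+1) * ((df k : ℝ) * (c^2 + σ)^k) := by
          rw [← Finset.mul_sum, ← Finset.mul_sum, add_comm (c^2) σ, add_pow]
          congr 1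
          congr 1
          apply Finset.sum_congr rfl
          intro i _
          ring


open Finset

lemma mgf_le : ∀ (n : ℕ) (a : Fin n → ℝ),
    ∑ ε : Fin n → Bool, Real.exp (∑ i, (if ε i then (1:ℝ) else -1) * a i)
      ≤ 2^n * Real.exp ((∑ i, (a i)^2) / 2) := by
  intro n
  induction n with
  | zero =>
    intro a
    have h0 : ∀ ε : Fin 0 → Bool, Real.exp (∑ i, (if ε i then (1:ℝ) else -1) * a i)
        = Real.exp 0 := by intro ε; simp
    rw [Finset.sum_congr rfl (fun ε _ => h0 ε), Finset.sum_const]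
    have hcard : (Finset.univ : Finset (Fin 0 → Bool)).card = 1 := by
      simp [Fintype.card_fun]
    simp [hcard]
  | succ n ih =>
    intro a
    rw [sum_split]
    set c := a 0 with hc
    set b : Fin n → ℝ := fun i => a i.succ with hb
    have hsum : ∀ (s : Bool) (ε : Fin n → Bool),
        (∑ i : Fin (n+1), (if (Fin.cons s ε : Fin (n+1) → Bool) i then (1:ℝ) else -1) * a i)
          = (∑ i, (if ε i then (1:ℝ) else -1) * b i) + (if s then (1:ℝ) else -1) * c := by
      intro s ε
      rw [Fin.sum_univ_succ]
      simp only [Fin.cons_zero, Fin.cons_succ]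
      rw [add_comm]
    have point : ∀ ε : Fin n → Bool,
        Real.exp (∑ i : Fin (n+1),
            (if (Fin.cons true ε : Fin (n+1) → Bool) i then (1:ℝ) else -1) * a i)
          + Real.exp (∑ i : Fin (n+1),
            (if (Fin.cons false ε : Fin (n+1) → Bool) i then (1:ℝ) else -1) * a i)
        = (2 * Real.cosh c) * Real.exp (∑ i, (if ε i then (1:ℝ) else -1) * b i) := by
      intro ε
      rw [hsum true ε, hsum false ε, Real.exp_add, Real.exp_add, Real.cosh_eq]
      norm_num
      ring
    rw [Finset.sum_congr rfl (fun ε _ => point ε), ← Finset.mul_sum]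
    have hcosh : 0 ≤ 2 * Real.cosh c := by positivity
    have h1 : (2 * Real.cosh c) * (∑ ε : Fin n → Bool,
          Real.exp (∑ i, (if ε i then (1:ℝ) else -1) * b i))
        ≤ (2 * Real.cosh c) * (2^n * Real.exp ((∑ i, (b i)^2) / 2)) :=
      mul_le_mul_of_nonneg_left (ih b) hcosh
    refine h1.trans ?_
    have h2 : Real.cosh c ≤ Real.exp (c^2/2) := Real.cosh_le_exp_half_sq c
    have hfin : (∑ i : Fin (n+1), (a i)^2) = c^2 + ∑ i, (b i)^2 := by
      rw [Fin.sum_univ_succ]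
    rw [hfin]
    calc (2 * Real.cosh c) * (2^n * Real.exp ((∑ i, (b i)^2) / 2))
        ≤ (2 * Real.exp (c^2/2)) * (2^n * Real.exp ((∑ i, (b i)^2) / 2)) := by
          apply mul_le_mul_of_nonneg_right _ (by positivity)
          linarith
      _ = 2^(n+1) * Real.exp ((c^2 + ∑ i, (b i)^2) / 2) := by
          rw [show (c^2 + ∑ i, (b i)^2) / 2 = c^2/2 + (∑ i, (b i)^2)/2 by ring, Real.exp_add]
          ring

lemma holder2 {ι : Type*} [Fintype ι] (w X Y : ι → ℝ) (hw : ∀ i, 0 ≤ w i)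
    (hX : ∀ i, 0 ≤ X i) (hY : ∀ i, 0 ≤ Y i)
    {α β : ℝ} (ha : 0 ≤ α) (hb : 0 ≤ β) (hab : α + β = 1) :
    ∑ i, w i * (X i ^ α * Y i ^ β) ≤ (∑ i, w i * X i) ^ α * (∑ i, w i * Y i) ^ β := by
  rcases eq_or_lt_of_le ha with ha0 | ha0
  · -- α = 0, β = 1
    have hb1 : β = 1 := by linarith
    simp only [← ha0, hb1, Real.rpow_zero, Real.rpow_one, one_mul]
    exact le_rfl
  rcases eq_or_lt_of_le hb with hb0 | hb0
  · have ha1 : α = 1 := by linarith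
    simp only [← hb0, ha1, Real.rpow_zero, Real.rpow_one, mul_one]
    exact le_rfl
  set A := ∑ i, w i * X i with hA
  set B := ∑ i, w i * Y i with hB
  have hA0 : 0 ≤ A := Finset.sum_nonneg fun i _ => mul_nonneg (hw i) (hX i)
  have hB0 : 0 ≤ B := Finset.sum_nonneg fun i _ => mul_nonneg (hw i) (hY i)
  rcases eq_or_lt_of_le hA0 with hA0' | hA0'
  · -- A = 0 : each w i * X i = 0
    have hz : ∀ i ∈ Finset.univ, w i * X i = 0 := by
      intro i _
      exact (Finset.sum_eq_zero_iff_of_nonneg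
        (fun i _ => mul_nonneg (hw i) (hX i))).mp hA0'.symm i (Finset.mem_univ i)
    have hlhs : ∑ i, w i * (X i ^ α * Y i ^ β) = 0 := by
      apply Finset.sum_eq_zero
      intro i _
      rcases mul_eq_zero.mp (hz i (Finset.mem_univ i)) with h | h
      · rw [h, zero_mul]
      · rw [h, Real.zero_rpow (ne_of_gt ha0), zero_mul, mul_zero]
    rw [hlhs, ← hA0', Real.zero_rpow (ne_of_gt ha0), zero_mul]
  rcases eq_or_lt_of_le hB0 with hB0' | hB0'
  · have hz : ∀ i ∈ Finset.univ, w i * Y i = 0 := by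
      intro i _
      exact (Finset.sum_eq_zero_iff_of_nonneg
        (fun i _ => mul_nonneg (hw i) (hY i))).mp hB0'.symm i (Finset.mem_univ i)
    have hlhs : ∑ i, w i * (X i ^ α * Y i ^ β) = 0 := by
      apply Finset.sum_eq_zero
      intro i _
      rcases mul_eq_zero.mp (hz i (Finset.mem_univ i)) with h | h
      · rw [h, zero_mul]
      · rw [h, Real.zero_rpow (ne_of_gt hb0), mul_zero, mul_zero]
    rw [hlhs, ← hB0', Real.zero_rpow (ne_of_gt hb0), mul_zero]
  -- A, B > 0
  have key : ∀ i, X i ^ α * Y i ^ β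
      ≤ A ^ α * B ^ β * (α * (X i / A) + β * (Y i / B)) := by
    intro i
    have hg := Real.geom_mean_le_arith_mean2_weighted ha hb
      (div_nonneg (hX i) hA0) (div_nonneg (hY i) hB0) hab
    have he : (X i / A) ^ α * (Y i / B) ^ β = (X i ^ α * Y i ^ β) / (A ^ α * B ^ β) := by
      rw [Real.div_rpow (hX i) hA0, Real.div_rpow (hY i) hB0]
      ring
    rw [he, div_le_iff₀ (by positivity)] at hg
    calc X i ^ α * Y i ^ β ≤ (α * (X i / A) + β * (Y i / B)) * (A ^ α * B ^ β) := hg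
      _ = A ^ α * B ^ β * (α * (X i / A) + β * (Y i / B)) := by ring
  calc ∑ i, w i * (X i ^ α * Y i ^ β)
      ≤ ∑ i, w i * (A ^ α * B ^ β * (α * (X i / A) + β * (Y i / B))) :=
        Finset.sum_le_sum fun i _ => mul_le_mul_of_nonneg_left (key i) (hw i)
    _ = A ^ α * B ^ β * ((α / A) * (∑ i, w i * X i) + (β / B) * (∑ i, w i * Y i)) := by
        rw [Finset.sum_congr rfl (fun i _ =>
          show w i * (A ^ α * B ^ β * (α * (X i / A) + β * (Y i / B)))
              = A ^ α * B ^ β * ((α / A) * (w i * X i)) + A ^ α * B ^ β * ((β / B) * (w i * Y i))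
            from by ring)]
        rw [Finset.sum_add_distrib, ← Finset.mul_sum, ← Finset.mul_sum,
          ← Finset.mul_sum, ← Finset.mul_sum, ← mul_add]
    _ = A ^ α * B ^ β := by
        rw [div_mul_cancel₀ _ (ne_of_gt hA0'), div_mul_cancel₀ _ (ne_of_gt hB0'), hab, mul_one]

lemma log_jensen {ι : Type*} [Fintype ι] [Nonempty ι] (w X : ι → ℝ) (hw : ∀ i, 0 ≤ w i)
    (hw1 : ∑ i, w i = 1) (hX : ∀ i, 0 < X i) :
    ∑ i, w i * Real.log (X i) ≤ Real.log (∑ i, w i * X i) := by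
  have h := (strictConcaveOn_log_Ioi.concaveOn).le_map_sum
    (t := Finset.univ) (w := w) (p := X) (fun i _ => hw i) hw1
    (fun i _ => Set.mem_Ioi.mpr (hX i))
  simpa [smul_eq_mul] using h



lemma exp_half_lt_three : Real.exp (1/2 : ℝ) < 3 := by
  have h1 : Real.exp (1/2 : ℝ) ^ (2:ℕ) = Real.exp 1 := by
    rw [← Real.exp_nat_mul]; norm_num
  have h2 : Real.exp (1/2 : ℝ) ^ (2:ℕ) < 3 ^ (2:ℕ) := by
    rw [h1]; have := Real.exp_one_lt_d9; norm_num at this ⊢; linarith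
  exact lt_of_pow_lt_pow_left₀ 2 (by norm_num) h2

lemma exp_threehalf_lt_five : Real.exp (3/2 : ℝ) < 5 := by
  have h1 : Real.exp (3/2 : ℝ) ^ (2:ℕ) = Real.exp 1 ^ (3:ℕ) := by
    rw [← Real.exp_nat_mul, ← Real.exp_nat_mul]; norm_num
  have h2 : Real.exp (3/2 : ℝ) ^ (2:ℕ) < 5 ^ (2:ℕ) := by
    rw [h1]
    have := Real.exp_one_lt_d9
    have h3 : Real.exp 1 ^ (3:ℕ) < 2.7182818286 ^ (3:ℕ) :=
      pow_lt_pow_left₀ this (Real.exp_pos 1).le (by norm_num)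
    nlinarith [h3]
  exact lt_of_pow_lt_pow_left₀ 2 (by norm_num) h2

lemma numeric (q : ℝ) (k : ℕ) (hq2 : 2 ≤ q) (hqk : q ≤ 2*(k:ℝ))
    (hcase : k = 2 ∨ (3 ≤ k ∧ 2*(k:ℝ) - 2 < q)) :
    ((df k : ℝ)) ^ ((q-2)/(2*q*((k:ℝ)-1))) ≤ Real.sqrt (q-1) := by
  have hq0 : (0:ℝ) < q := by linarith
  have hq1 : (0:ℝ) < q - 1 := by linarith
  have hdfpos : (0:ℝ) < (df k : ℝ) := by exact_mod_cast df_pos k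
  rw [Real.rpow_def_of_pos hdfpos, Real.sqrt_eq_rpow, Real.rpow_def_of_pos hq1]
  apply Real.exp_le_exp.mpr
  rcases hcase with hk2 | ⟨hk3, hq2k⟩
  · -- k = 2 case
    subst hk2
    have hdf2 : (df 2 : ℝ) = 3 := by norm_num [df]
    have hq4 : q ≤ 4 := by
      have : ((2:ℕ):ℝ) = 2 := by norm_num
      rw [this] at hqk; linarith
    have hkc : ((2:ℕ):ℝ) - 1 = 1 := by norm_num
    rw [hdf2, hkc, mul_one]
    set t : ℝ := (q-2)/2 with ht
    have ht0 : 0 ≤ t := by rw [ht]; linarith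
    have ht1 : t ≤ 1 := by rw [ht]; linarith
    have chord : Real.exp (t * Real.log 3) ≤ 1 + 2*t := by
      have h := convexOn_exp.2 (Set.mem_univ (0:ℝ)) (Set.mem_univ (Real.log 3))
        (by linarith : (0:ℝ) ≤ 1 - t) ht0 (by ring)
      simp only [smul_eq_mul, mul_zero, zero_add, Real.exp_zero] at h
      rw [Real.exp_log (by norm_num : (0:ℝ) < 3)] at h
      calc Real.exp (t * Real.log 3) ≤ (1-t)*1 + t*3 := h
        _ = 1 + 2*t := by ring
    have key : (q-2) * Real.log 3 ≤ 2 * Real.log (q-1) := by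
      have h2 : t * Real.log 3 ≤ Real.log (1 + 2*t) :=
        (Real.le_log_iff_exp_le (by linarith)).mpr chord
      have h3 : 1 + 2*t = q - 1 := by rw [ht]; ring
      rw [h3] at h2
      calc (q-2) * Real.log 3 = 2 * (t * Real.log 3) := by rw [ht]; ring
        _ ≤ 2 * Real.log (q-1) := by linarith
    have hL : 0 ≤ Real.log (q-1) := Real.log_nonneg (by linarith)
    have e : Real.log 3 * ((q-2)/(2*q)) = (Real.log 3 * (q-2))/(2*q) := by ring
    rw [e, div_le_iff₀ (by positivity)]
    nlinarith [key, hL, hq2]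
  · -- k ≥ 3 case
    have hkR : (3:ℝ) ≤ (k:ℝ) := by exact_mod_cast hk3
    have hq4 : (4:ℝ) < q := by linarith
    have hkR1 : (0:ℝ) < (k:ℝ) - 1 := by linarith
    -- log (df k) ≤ (k-1) * log (q+1)
    have hdfle : (df k : ℝ) ≤ (2*(k:ℝ) - 1)^((k-1 : ℕ)) := by
      have h := df_le_pow (k-1)
      rw [show k - 1 + 1 = k by omega] at h
      have h2 : ((df k : ℕ):ℝ) ≤ (((2*(k-1)+1)^(k-1) : ℕ):ℝ) := by exact_mod_cast h
      rw [Nat.cast_pow] at h2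
      have h3 : ((2*(k-1)+1 : ℕ):ℝ) = 2*(k:ℝ) - 1 := by
        push_cast [Nat.cast_sub (by omega : 1 ≤ k)]; ring
      rwa [h3] at h2
    have h2k1pos : (0:ℝ) < 2*(k:ℝ) - 1 := by linarith
    have hlog1 : Real.log (df k) ≤ ((k:ℝ) - 1) * Real.log (2*(k:ℝ) - 1) := by
      have := Real.log_le_log hdfpos hdfle
      rwa [Real.log_pow, show (((k-1:ℕ)):ℝ) = (k:ℝ)-1 by
        push_cast [Nat.cast_sub (by omega : 1 ≤ k)]; ring] at this
    have hlog2 : Real.log (2*(k:ℝ) - 1) ≤ Real.log (q+1) :=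
      Real.log_le_log h2k1pos (by linarith)
    have hlogq1 : (0:ℝ) ≤ Real.log (q+1) := Real.log_nonneg (by linarith)
    have hlog3 : Real.log (df k) ≤ ((k:ℝ) - 1) * Real.log (q+1) := by
      calc Real.log (df k) ≤ ((k:ℝ) - 1) * Real.log (2*(k:ℝ) - 1) := hlog1
        _ ≤ ((k:ℝ) - 1) * Real.log (q+1) :=
            mul_le_mul_of_nonneg_left hlog2 (by linarith)
    have he1 : (0:ℝ) ≤ (q-2)/(2*q*((k:ℝ)-1)) :=
      div_nonneg (by linarith) (by nlinarith)
    have step : Real.log (df k) * ((q-2)/(2*q*((k:ℝ)-1)))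
        ≤ Real.log (q+1) * ((q-2)/(2*q)) := by
      calc Real.log (df k) * ((q-2)/(2*q*((k:ℝ)-1)))
          ≤ (((k:ℝ) - 1) * Real.log (q+1)) * ((q-2)/(2*q*((k:ℝ)-1))) :=
            mul_le_mul_of_nonneg_right hlog3 he1
        _ = Real.log (q+1) * ((q-2)/(2*q)) := by
            field_simp
    refine step.trans ?_
    -- final: log(q+1) * (q-2)/(2q) ≤ log(q-1) * (1/2)
    have l1 : Real.log (q+1) - Real.log (q-1) = Real.log ((q+1)/(q-1)) :=
      (Real.log_div (by linarith) (by linarith)).symm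
    have l2 : Real.log ((q+1)/(q-1)) ≤ 2/(q-1) := by
      have h := Real.log_le_sub_one_of_pos (show (0:ℝ) < (q+1)/(q-1) by positivity)
      have e : (q+1)/(q-1) - 1 = 2/(q-1) := by
        field_simp
        norm_num
      linarith [e ▸ h]
    have f1 : (Real.log (q+1) - Real.log (q-1)) * (q-1) ≤ 2 := by
      rw [l1]
      have := mul_le_mul_of_nonneg_right l2 (by linarith : (0:ℝ) ≤ q-1)
      rwa [div_mul_cancel₀ _ (by linarith : q-1 ≠ 0)] at this
    have f2 : (3:ℝ)/2 ≤ Real.log (q+1) := by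
      rw [Real.le_log_iff_exp_le (by linarith)]
      linarith [exp_threehalf_lt_five]
    have f4 : (1:ℝ)/2 ≤ Real.log (q-1) := by
      rw [Real.le_log_iff_exp_le (by linarith)]
      linarith [exp_half_lt_three]
    have e : Real.log (q+1) * ((q-2)/(2*q)) = (Real.log (q+1) * (q-2))/(2*q) := by ring
    rw [e, div_le_iff₀ (by positivity)]
    nlinarith [f1, f2, f4, hq4]


open Finset

lemma branchA (q : ℝ) (hq2 : 2 ≤ q) (m1 n : ℕ) (hm : 0 < m1) (hn : 1 ≤ n)
    (z : Fin n → Fin m1 → ℝ) (hz : ∀ i j, |z i j| ≤ 1) :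
    ((2:ℝ)^n)⁻¹ * ∑ ε : Fin n → Bool,
        (∑ j, |∑ i, (if ε i then (1:ℝ) else -1) * z i j| ^ q) ^ (1/q)
      ≤ (m1:ℝ)^(1/q) * Real.sqrt n * Real.sqrt (q-1) := by
  have hq0 : (0:ℝ) < q := by linarith
  have hqne : q ≠ 0 := ne_of_gt hq0
  have hq1 : (1:ℝ) ≤ q := by linarith
  set w : ℝ := ((2:ℝ)^n)⁻¹ with hw
  have hw0 : 0 ≤ w := by positivity
  have hw2 : w * (2:ℝ)^n = 1 := by rw [hw]; field_simp
  set S : (Fin n → Bool) → Fin m1 → ℝ :=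
    fun ε j => ∑ i, (if ε i then (1:ℝ) else -1) * z i j with hS
  set X : (Fin n → Bool) → ℝ := fun ε => ∑ j, |S ε j| ^ q with hX
  have hXnn : ∀ ε, 0 ≤ X ε := fun ε =>
    Finset.sum_nonneg fun j _ => Real.rpow_nonneg (abs_nonneg _) q
  -- define k, α, β
  set k : ℕ := max 2 (Nat.ceil (q/2)) with hk
  have hk2 : 2 ≤ k := le_max_left _ _
  have hkR2 : (2:ℝ) ≤ (k:ℝ) := by exact_mod_cast hk2
  have hq2k : q ≤ 2*(k:ℝ) := by
    have h1 : q/2 ≤ (Nat.ceil (q/2) : ℝ) := Nat.le_ceil _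
    have h2 : (Nat.ceil (q/2) : ℝ) ≤ (k:ℝ) := by exact_mod_cast le_max_right _ _
    linarith
  have hkcase : k = 2 ∨ (3 ≤ k ∧ 2*(k:ℝ) - 2 < q) := by
    rcases le_or_gt (Nat.ceil (q/2)) 2 with h | h
    · left; rw [hk]; exact max_eq_left h
    · right
      have hke : k = Nat.ceil (q/2) := by rw [hk]; exact max_eq_right (le_of_lt h)
      constructor
      · omega
      · have := Nat.ceil_lt_add_one (show (0:ℝ) ≤ q/2 by linarith)
        rw [← hke] at this
        linarith
  have hkR1 : (0:ℝ) < (k:ℝ) - 1 := by linarith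
  set β : ℝ := (q-2)/(2*((k:ℝ)-1)) with hβ
  set α : ℝ := 1 - β with hα
  have hβ0 : 0 ≤ β := div_nonneg (by linarith) (by linarith)
  have hβ1 : β ≤ 1 := by
    rw [hβ, div_le_one (by linarith)]; linarith
  have hα0 : 0 ≤ α := by rw [hα]; linarith
  have hab : α + β = 1 := by rw [hα]; ring
  have h2b : β * (2*((k:ℝ)-1)) = q - 2 := div_mul_cancel₀ _ (by linarith)
  have hdf0 : (0:ℝ) ≤ (df k : ℝ) := by positivity
  -- pointwise identity
  have hexps : ((2:ℕ):ℝ)*α + ((2*k:ℕ):ℝ)*β = q := by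
    push_cast
    linear_combination h2b
  have hid : ∀ x : ℝ, |x|^q = ((x^(2:ℕ) : ℝ))^α * ((x^(2*k:ℕ) : ℝ))^β := by
    intro x
    calc |x|^q = |x| ^ (((2:ℕ):ℝ)*α + ((2*k:ℕ):ℝ)*β) := by rw [hexps]
      _ = |x| ^ (((2:ℕ):ℝ)*α) * |x| ^ (((2*k:ℕ):ℝ)*β) :=
          Real.rpow_add' (abs_nonneg x) (by rw [hexps]; exact hqne)
      _ = ((|x|^(2:ℕ) : ℝ))^α * ((|x|^(2*k:ℕ) : ℝ))^β := by
          rw [Real.rpow_mul (abs_nonneg x), Real.rpow_mul (abs_nonneg x),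
            Real.rpow_natCast, Real.rpow_natCast]
      _ = ((x^(2:ℕ) : ℝ))^α * ((x^(2*k:ℕ) : ℝ))^β := by
          rw [Even.pow_abs (by exact ⟨1, by ring⟩) x, Even.pow_abs ⟨k, by ring⟩ x]
  -- per-coordinate moment bound
  have perj : ∀ j : Fin m1, ∑ ε : Fin n → Bool, w * |S ε j| ^ q
      ≤ ((df k : ℝ))^β * ((n:ℝ) ^ (q/2 : ℝ)) := by
    intro j
    set a : Fin n → ℝ := fun i => z i j with ha
    set σ : ℝ := ∑ i, (a i)^2 with hσ
    have hσ0 : 0 ≤ σ := by positivity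
    have hσn : σ ≤ (n:ℝ) := by
      rw [hσ]
      calc ∑ i, (a i)^2 ≤ ∑ _i : Fin n, (1:ℝ) := by
            apply Finset.sum_le_sum
            intro i _
            have := hz i j
            nlinarith [abs_nonneg (z i j), sq_abs (z i j)]
        _ = (n:ℝ) := by simp
    have hM2 : ∑ ε : Fin n → Bool, w * (S ε j)^(2:ℕ) ≤ σ := by
      rw [← Finset.mul_sum]
      have h := even_moment n a 1
      have h2 : ∑ ε : Fin n → Bool, (S ε j)^(2:ℕ) ≤ 2^n * σ := by
        have e : ∀ ε : Fin n → Bool, (S ε j)^(2:ℕ) = (∑ i, (if ε i then (1:ℝ) else -1) * a i)^(2*1) := by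
          intro ε; rw [hS]
        rw [Finset.sum_congr rfl fun ε _ => e ε]
        calc _ ≤ (2:ℝ)^n * ((df 1 : ℝ) * σ^1) := h
          _ = 2^n * σ := by norm_num [df]
      calc w * ∑ ε : Fin n → Bool, (S ε j)^(2:ℕ) ≤ w * (2^n * σ) :=
            mul_le_mul_of_nonneg_left h2 hw0
        _ = σ := by rw [← mul_assoc, hw2, one_mul]
    have hM2k : ∑ ε : Fin n → Bool, w * (S ε j)^(2*k:ℕ) ≤ (df k : ℝ) * σ^k := by
      rw [← Finset.mul_sum]
      have h := even_moment n a k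
      have e : ∀ ε : Fin n → Bool, (S ε j)^(2*k:ℕ) = (∑ i, (if ε i then (1:ℝ) else -1) * a i)^(2*k) := by
        intro ε; rw [hS]
      rw [Finset.sum_congr rfl fun ε _ => e ε] at *
      calc w * ∑ ε : Fin n → Bool, (∑ i, (if ε i then (1:ℝ) else -1) * a i)^(2*k)
          ≤ w * (2^n * ((df k:ℝ) * σ^k)) := mul_le_mul_of_nonneg_left h hw0
        _ = (df k:ℝ) * σ^k := by rw [← mul_assoc, hw2, one_mul]
    have hsq : ∀ ε, |S ε j| ^ q = ((S ε j^(2:ℕ):ℝ))^α * ((S ε j^(2*k:ℕ):ℝ))^β :=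
      fun ε => hid (S ε j)
    have hhold : ∑ ε : Fin n → Bool, w * (((S ε j^(2:ℕ):ℝ))^α * ((S ε j^(2*k:ℕ):ℝ))^β)
        ≤ (∑ ε : Fin n → Bool, w * (S ε j)^(2:ℕ))^α * (∑ ε : Fin n → Bool, w * (S ε j)^(2*k:ℕ))^β := by
      apply holder2 _ _ _ (fun _ => hw0) (fun ε => sq_nonneg _)
        (fun ε => (even_two_mul k).pow_nonneg _) hα0 hβ0 hab
    have hm2nn : 0 ≤ ∑ ε : Fin n → Bool, w * (S ε j)^(2:ℕ) :=
      Finset.sum_nonneg fun ε _ => mul_nonneg hw0 (sq_nonneg _)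
    have hm2knn : 0 ≤ ∑ ε : Fin n → Bool, w * (S ε j)^(2*k:ℕ) :=
      Finset.sum_nonneg fun ε _ => mul_nonneg hw0 ((even_two_mul k).pow_nonneg _)
    calc ∑ ε : Fin n → Bool, w * |S ε j| ^ q
        = ∑ ε : Fin n → Bool, w * (((S ε j^(2:ℕ):ℝ))^α * ((S ε j^(2*k:ℕ):ℝ))^β) := by
          exact Finset.sum_congr rfl fun ε _ => by rw [hsq ε]
      _ ≤ (∑ ε : Fin n → Bool, w * (S ε j)^(2:ℕ))^α * (∑ ε : Fin n → Bool, w * (S ε j)^(2*k:ℕ))^β := hhold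
      _ ≤ σ^α * ((df k : ℝ) * σ^k)^β := by
          apply mul_le_mul (Real.rpow_le_rpow hm2nn hM2 hα0)
            (Real.rpow_le_rpow hm2knn hM2k hβ0) (Real.rpow_nonneg hm2knn β)
            (Real.rpow_nonneg hσ0 α)
      _ = ((df k : ℝ))^β * (σ ^ (α + (k:ℝ)*β)) := by
          rw [Real.mul_rpow hdf0 (by positivity), Real.rpow_add' hσ0
            (show α + (k:ℝ)*β ≠ 0 by nlinarith [mul_nonneg (by linarith : (0:ℝ) ≤ (k:ℝ)) hβ0])]
          rw [← Real.rpow_natCast σ k, ← Real.rpow_mul hσ0]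
          ring
      _ ≤ ((df k : ℝ))^β * ((n:ℝ) ^ (q/2 : ℝ)) := by
          have hhalf : α + (k:ℝ)*β = q/2 := by rw [hα]; linear_combination h2b/2
          rw [hhalf]
          exact mul_le_mul_of_nonneg_left
            (Real.rpow_le_rpow hσ0 hσn (by linarith)) (Real.rpow_nonneg hdf0 β)
  -- sum over ε via Jensen
  have jensen : w * (∑ ε : Fin n → Bool, X ε ^ (1/q))
      ≤ (∑ ε : Fin n → Bool, w * X ε) ^ (1/q) := by
    have hwsum : ∑ _ε : Fin n → Bool, w = 1 := by
      rw [Finset.sum_const, Finset.card_univ, Fintype.card_fun]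
      simp only [Fintype.card_bool, Fintype.card_fin, nsmul_eq_mul]
      push_cast
      rw [mul_comm]
      exact hw2
    have h := Real.arith_mean_le_rpow_mean Finset.univ (fun _ => w)
      (fun ε => X ε ^ (1/q)) (fun _ _ => hw0) hwsum
      (fun ε _ => Real.rpow_nonneg (hXnn ε) _) hq1
    rw [Finset.mul_sum]
    have e : ∀ ε : Fin n → Bool, (X ε ^ (1/q : ℝ)) ^ q = X ε := by
      intro ε
      rw [← Real.rpow_mul (hXnn ε), one_div_mul_cancel hqne, Real.rpow_one]
    calc ∑ ε : Fin n → Bool, w * X ε ^ (1/q) ≤ (∑ ε : Fin n → Bool, w * (X ε ^ (1/q:ℝ))^q)^(1/q) := h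
      _ = (∑ ε : Fin n → Bool, w * X ε) ^ (1/q) := by
          rw [Finset.sum_congr rfl fun ε _ => by rw [e ε]]
  -- total bound
  have total : ∑ ε : Fin n → Bool, w * X ε ≤ (m1:ℝ) * (((df k : ℝ))^β * ((n:ℝ) ^ (q/2 : ℝ))) := by
    have swap : ∑ ε : Fin n → Bool, w * X ε
        = ∑ j : Fin m1, ∑ ε : Fin n → Bool, w * |S ε j| ^ q := by
      rw [Finset.sum_comm]
      exact Finset.sum_congr rfl fun ε _ => by rw [hX, Finset.mul_sum]
    rw [swap]
    calc ∑ j : Fin m1, ∑ ε : Fin n → Bool, w * |S ε j| ^ q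
        ≤ ∑ _j : Fin m1, ((df k : ℝ))^β * ((n:ℝ) ^ (q/2 : ℝ)) :=
          Finset.sum_le_sum fun j _ => perj j
      _ = (m1:ℝ) * (((df k : ℝ))^β * ((n:ℝ) ^ (q/2 : ℝ))) := by
          rw [Finset.sum_const, Finset.card_univ, Fintype.card_fin, nsmul_eq_mul]
  -- final chain
  have hsum_nn : 0 ≤ ∑ ε : Fin n → Bool, w * X ε :=
    Finset.sum_nonneg fun ε _ => mul_nonneg hw0 (hXnn ε)
  have step : ((2:ℝ)^n)⁻¹ * ∑ ε : Fin n → Bool, X ε ^ (1/q)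
      ≤ ((m1:ℝ) * (((df k : ℝ))^β * ((n:ℝ) ^ (q/2 : ℝ)))) ^ (1/q) := by
    calc ((2:ℝ)^n)⁻¹ * ∑ ε : Fin n → Bool, X ε ^ (1/q)
        ≤ (∑ ε : Fin n → Bool, w * X ε) ^ (1/q) := jensen
      _ ≤ ((m1:ℝ) * (((df k : ℝ))^β * ((n:ℝ) ^ (q/2 : ℝ)))) ^ (1/q) :=
          Real.rpow_le_rpow hsum_nn total (by positivity)
  refine step.trans ?_
  have hnn0 : (0:ℝ) ≤ (n:ℝ) := by positivity
  have expand : ((m1:ℝ) * (((df k : ℝ))^β * ((n:ℝ) ^ (q/2 : ℝ)))) ^ (1/q)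
      = (m1:ℝ)^(1/q : ℝ) * (((df k : ℝ))^(β/q : ℝ) * ((n:ℝ) ^ (1/2 : ℝ))) := by
    rw [Real.mul_rpow (by positivity) (by positivity),
      Real.mul_rpow (Real.rpow_nonneg hdf0 β) (Real.rpow_nonneg hnn0 _),
      ← Real.rpow_mul hdf0, ← Real.rpow_mul hnn0]
    have hqq : q/2 * (1/q) = 1/2 := by field_simp
    rw [mul_one_div, hqq]
  rw [expand]
  have hnum : ((df k : ℝ))^(β/q : ℝ) ≤ Real.sqrt (q-1) := by
    have e : β/q = (q-2)/(2*q*((k:ℝ)-1)) := by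
      rw [hβ, div_div]
      congr 1
      ring
    rw [e]
    exact numeric q k hq2 hq2k hkcase
  have hsqrtn : ((n:ℝ) ^ (1/2 : ℝ)) = Real.sqrt n := (Real.sqrt_eq_rpow _).symm
  rw [hsqrtn]
  calc (m1:ℝ)^(1/q : ℝ) * (((df k : ℝ))^(β/q : ℝ) * Real.sqrt n)
      ≤ (m1:ℝ)^(1/q : ℝ) * (Real.sqrt (q-1) * Real.sqrt n) := by
        apply mul_le_mul_of_nonneg_left _ (Real.rpow_nonneg (by positivity) _)
        exact mul_le_mul_of_nonneg_right hnum (Real.sqrt_nonneg _)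
    _ = (m1:ℝ)^(1/q) * Real.sqrt n * Real.sqrt (q-1) := by ring


open Finset

lemma branchB (q : ℝ) (hq2 : 2 ≤ q) (m1 n : ℕ) (hm : 0 < m1) (hn : 1 ≤ n)
    (z : Fin n → Fin m1 → ℝ) (hz : ∀ i j, |z i j| ≤ 1) :
    ((2:ℝ)^n)⁻¹ * ∑ ε : Fin n → Bool,
        (∑ j, |∑ i, (if ε i then (1:ℝ) else -1) * z i j| ^ q) ^ (1/q)
      ≤ (m1:ℝ)^(1/q) * Real.sqrt n * Real.sqrt (2*Real.log (2*(m1:ℝ))) := by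
  have hq0 : (0:ℝ) < q := by linarith
  have hqne : q ≠ 0 := ne_of_gt hq0
  have hn0 : (0:ℝ) < (n:ℝ) := by exact_mod_cast hn
  have hm0 : (0:ℝ) < (m1:ℝ) := by exact_mod_cast hm
  set w : ℝ := ((2:ℝ)^n)⁻¹ with hw
  have hw0 : 0 ≤ w := by positivity
  have hw2 : w * (2:ℝ)^n = 1 := by rw [hw]; field_simp
  have hwsum : ∑ _ε : Fin n → Bool, w = 1 := by
    rw [Finset.sum_const, Finset.card_univ, Fintype.card_fun]
    simp only [Fintype.card_bool, Fintype.card_fin, nsmul_eq_mul]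
    push_cast
    rw [mul_comm]
    exact hw2
  set S : (Fin n → Bool) → Fin m1 → ℝ :=
    fun ε j => ∑ i, (if ε i then (1:ℝ) else -1) * z i j with hS
  set L : ℝ := Real.log (2*(m1:ℝ)) with hL
  have hm1 : (1:ℝ) ≤ (m1:ℝ) := by exact_mod_cast hm
  have hL0 : 0 < L := Real.log_pos (by linarith)
  set lam : ℝ := Real.sqrt (2*L/n) with hlam
  have hlam0 : 0 < lam := Real.sqrt_pos.mpr (by positivity)
  set Z : (Fin n → Bool) → ℝ :=
    fun ε => ∑ j, (Real.exp (lam * S ε j) + Real.exp (-(lam * S ε j))) with hZ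
  have hterm1 : ∀ t : ℝ, (1:ℝ) ≤ Real.exp t + Real.exp (-t) := by
    intro t
    rcases le_total 0 t with h | h
    · have := Real.one_le_exp h
      linarith [Real.exp_pos (-t)]
    · have := Real.one_le_exp (by linarith : 0 ≤ -t)
      linarith [Real.exp_pos t]
  have hsingle : ∀ ε (j : Fin m1),
      Real.exp (lam * S ε j) + Real.exp (-(lam * S ε j)) ≤ Z ε := by
    intro ε j
    have h := Finset.single_le_sum
      (f := fun j => Real.exp (lam * S ε j) + Real.exp (-(lam * S ε j)))
      (fun j _ => by positivity) (Finset.mem_univ j)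
    rw [hZ]
    exact h
  have hZ1 : ∀ ε, (1:ℝ) ≤ Z ε := by
    intro ε
    exact le_trans (hterm1 _) (hsingle ε ⟨0, hm⟩)
  have hZ0 : ∀ ε, (0:ℝ) < Z ε := fun ε => lt_of_lt_of_le one_pos (hZ1 ε)
  have hlogZ0 : ∀ ε, 0 ≤ Real.log (Z ε) := fun ε => Real.log_nonneg (hZ1 ε)
  have habs : ∀ ε j, lam * |S ε j| ≤ Real.log (Z ε) := by
    intro ε j
    rw [Real.le_log_iff_exp_le (hZ0 ε)]
    have h1 : Real.exp (lam * |S ε j|)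
        ≤ Real.exp (lam * S ε j) + Real.exp (-(lam * S ε j)) := by
      rcases abs_cases (S ε j) with ⟨h, _⟩ | ⟨h, _⟩
      · rw [h]; linarith [Real.exp_pos (-(lam * S ε j))]
      · rw [h, mul_neg]
        linarith [Real.exp_pos (lam * S ε j)]
    exact h1.trans (hsingle ε j)
  have hSle : ∀ ε j, |S ε j| ≤ lam⁻¹ * Real.log (Z ε) := by
    intro ε j
    rw [← div_eq_inv_mul, le_div_iff₀ hlam0, mul_comm]
    exact habs ε j
  have hc0 : ∀ ε, 0 ≤ lam⁻¹ * Real.log (Z ε) :=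
    fun ε => mul_nonneg (by positivity) (hlogZ0 ε)
  -- pointwise bound on the rooted sum
  have hpoint : ∀ ε, (∑ j, |S ε j| ^ q) ^ (1/q : ℝ)
      ≤ (m1:ℝ)^(1/q : ℝ) * (lam⁻¹ * Real.log (Z ε)) := by
    intro ε
    have h1 : (∑ j, |S ε j| ^ q) ≤ (m1:ℝ) * (lam⁻¹ * Real.log (Z ε)) ^ q := by
      calc (∑ j, |S ε j| ^ q) ≤ ∑ _j : Fin m1, (lam⁻¹ * Real.log (Z ε)) ^ q :=
            Finset.sum_le_sum fun j _ =>
              Real.rpow_le_rpow (abs_nonneg _) (hSle ε j) (le_of_lt hq0)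
        _ = (m1:ℝ) * (lam⁻¹ * Real.log (Z ε)) ^ q := by
            rw [Finset.sum_const, Finset.card_univ, Fintype.card_fin, nsmul_eq_mul]
    calc (∑ j, |S ε j| ^ q) ^ (1/q : ℝ)
        ≤ ((m1:ℝ) * (lam⁻¹ * Real.log (Z ε)) ^ q) ^ (1/q : ℝ) :=
          Real.rpow_le_rpow (Finset.sum_nonneg fun j _ =>
            Real.rpow_nonneg (abs_nonneg _) q) h1 (by positivity)
      _ = (m1:ℝ)^(1/q : ℝ) * (lam⁻¹ * Real.log (Z ε)) := by
          rw [Real.mul_rpow (le_of_lt hm0) (Real.rpow_nonneg (hc0 ε) q),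
            ← Real.rpow_mul (hc0 ε), mul_one_div, div_self hqne, Real.rpow_one]
  -- expectation of Z
  have hmgf : ∀ (a : Fin n → ℝ), (∀ i, |a i| ≤ lam) →
      w * ∑ ε : Fin n → Bool, Real.exp (∑ i, (if ε i then (1:ℝ) else -1) * a i)
        ≤ Real.exp ((n:ℝ)*lam^2/2) := by
    intro a ha
    have h := mgf_le n a
    have h2 : (∑ i, (a i)^2) / 2 ≤ (n:ℝ)*lam^2/2 := by
      have h3 : ∑ i, (a i)^2 ≤ ∑ _i : Fin n, lam^2 := Finset.sum_le_sum fun i _ => by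
        nlinarith [ha i, abs_nonneg (a i), sq_abs (a i)]
      rw [Finset.sum_const, Finset.card_univ, Fintype.card_fin, nsmul_eq_mul] at h3
      linarith
    calc w * ∑ ε : Fin n → Bool, Real.exp (∑ i, (if ε i then (1:ℝ) else -1) * a i)
        ≤ w * (2^n * Real.exp ((∑ i, (a i)^2)/2)) := mul_le_mul_of_nonneg_left h hw0
      _ = Real.exp ((∑ i, (a i)^2)/2) := by rw [← mul_assoc, hw2, one_mul]
      _ ≤ Real.exp ((n:ℝ)*lam^2/2) := Real.exp_le_exp.mpr h2
  have hZsum : ∑ ε : Fin n → Bool, w * Z ε ≤ 2*(m1:ℝ)*Real.exp ((n:ℝ)*lam^2/2) := by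
    have swap : ∑ ε : Fin n → Bool, w * Z ε
        = ∑ j : Fin m1, ((w * ∑ ε : Fin n → Bool, Real.exp (lam * S ε j))
            + (w * ∑ ε : Fin n → Bool, Real.exp (-(lam * S ε j)))) := by
      calc ∑ ε : Fin n → Bool, w * Z ε
          = ∑ ε : Fin n → Bool, ∑ j,
              (w * Real.exp (lam * S ε j) + w * Real.exp (-(lam * S ε j))) := by
            apply Finset.sum_congr rfl; intro ε _
            rw [hZ, Finset.mul_sum]
            apply Finset.sum_congr rfl; intro j _; ring
        _ = ∑ j, ∑ ε : Fin n → Bool,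
              (w * Real.exp (lam * S ε j) + w * Real.exp (-(lam * S ε j))) :=
            Finset.sum_comm
        _ = ∑ j : Fin m1, ((w * ∑ ε : Fin n → Bool, Real.exp (lam * S ε j))
              + (w * ∑ ε : Fin n → Bool, Real.exp (-(lam * S ε j)))) := by
            apply Finset.sum_congr rfl; intro j _
            rw [Finset.sum_add_distrib, Finset.mul_sum, Finset.mul_sum]
    rw [swap]
    have hperj : ∀ j : Fin m1,
        (w * ∑ ε : Fin n → Bool, Real.exp (lam * S ε j))
          + (w * ∑ ε : Fin n → Bool, Real.exp (-(lam * S ε j)))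
        ≤ 2 * Real.exp ((n:ℝ)*lam^2/2) := by
      intro j
      have e1 : ∀ ε : Fin n → Bool, lam * S ε j
          = ∑ i, (if ε i then (1:ℝ) else -1) * (lam * z i j) := by
        intro ε
        rw [hS, Finset.mul_sum]
        apply Finset.sum_congr rfl; intro i _; ring
      have e2 : ∀ ε : Fin n → Bool, -(lam * S ε j)
          = ∑ i, (if ε i then (1:ℝ) else -1) * (-(lam * z i j)) := by
        intro ε
        rw [e1 ε, ← Finset.sum_neg_distrib]
        apply Finset.sum_congr rfl; intro i _; ring
      have hb1 : ∀ i, |lam * z i j| ≤ lam := by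
        intro i
        rw [abs_mul, abs_of_pos hlam0]
        nlinarith [hz i j, abs_nonneg (z i j)]
      have hb2 : ∀ i, |(-(lam * z i j))| ≤ lam := by
        intro i
        rw [abs_neg]; exact hb1 i
      have g1 := hmgf (fun i => lam * z i j) hb1
      have g2 := hmgf (fun i => -(lam * z i j)) hb2
      rw [Finset.sum_congr rfl (fun ε _ => by rw [e1 ε] :
        ∀ ε ∈ Finset.univ, Real.exp (lam * S ε j) =
          Real.exp (∑ i, (if ε i then (1:ℝ) else -1) * (lam * z i j))),
        Finset.sum_congr rfl (fun ε _ => by rw [e2 ε] :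
        ∀ ε ∈ Finset.univ, Real.exp (-(lam * S ε j)) =
          Real.exp (∑ i, (if ε i then (1:ℝ) else -1) * (-(lam * z i j))))]
      linarith [g1, g2]
    calc ∑ j : Fin m1, ((w * ∑ ε : Fin n → Bool, Real.exp (lam * S ε j))
              + (w * ∑ ε : Fin n → Bool, Real.exp (-(lam * S ε j))))
        ≤ ∑ _j : Fin m1, 2 * Real.exp ((n:ℝ)*lam^2/2) := Finset.sum_le_sum fun j _ => hperj j
      _ = 2*(m1:ℝ)*Real.exp ((n:ℝ)*lam^2/2) := by
          rw [Finset.sum_const, Finset.card_univ, Fintype.card_fin, nsmul_eq_mul]; ring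
  -- assemble branch B
  have hZsum_pos : 0 < ∑ ε : Fin n → Bool, w * Z ε := by
    apply Finset.sum_pos (fun ε _ => mul_pos (by positivity) (hZ0 ε)) ⟨fun _ => true, Finset.mem_univ _⟩
  have hlog2 : Real.log (∑ ε : Fin n → Bool, w * Z ε) ≤ L + (n:ℝ)*lam^2/2 := by
    calc Real.log (∑ ε : Fin n → Bool, w * Z ε)
        ≤ Real.log (2*(m1:ℝ)*Real.exp ((n:ℝ)*lam^2/2)) := Real.log_le_log hZsum_pos hZsum
      _ = L + (n:ℝ)*lam^2/2 := by
          rw [Real.log_mul (by positivity) (Real.exp_ne_zero _), Real.log_exp, hL]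
  have hlam2 : lam^2 = 2*L/(n:ℝ) := Real.sq_sqrt (by positivity)
  have hLval : (n:ℝ)*lam^2/2 = L := by rw [hlam2]; field_simp
  have main : ((2:ℝ)^n)⁻¹ * ∑ ε : Fin n → Bool,
        (∑ j, |S ε j| ^ q) ^ (1/q : ℝ)
      ≤ (m1:ℝ)^(1/q : ℝ) * (lam⁻¹ * (2*L)) := by
    calc ((2:ℝ)^n)⁻¹ * ∑ ε : Fin n → Bool, (∑ j, |S ε j| ^ q) ^ (1/q : ℝ)
        = ∑ ε : Fin n → Bool, w * ((∑ j, |S ε j| ^ q) ^ (1/q : ℝ)) := by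
          rw [← hw, Finset.mul_sum]
      _ ≤ ∑ ε : Fin n → Bool, w * ((m1:ℝ)^(1/q : ℝ) * (lam⁻¹ * Real.log (Z ε))) :=
          Finset.sum_le_sum fun ε _ => mul_le_mul_of_nonneg_left (hpoint ε) hw0
      _ = (m1:ℝ)^(1/q : ℝ) * lam⁻¹ * ∑ ε : Fin n → Bool, w * Real.log (Z ε) := by
          rw [Finset.mul_sum]
          apply Finset.sum_congr rfl; intro ε _; ring
      _ ≤ (m1:ℝ)^(1/q : ℝ) * lam⁻¹ * Real.log (∑ ε : Fin n → Bool, w * Z ε) := by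
          apply mul_le_mul_of_nonneg_left _ (by positivity)
          exact log_jensen (fun _ => w) Z (fun _ => hw0) hwsum hZ0
      _ ≤ (m1:ℝ)^(1/q : ℝ) * lam⁻¹ * (L + (n:ℝ)*lam^2/2) := by
          apply mul_le_mul_of_nonneg_left hlog2 (by positivity)
      _ = (m1:ℝ)^(1/q : ℝ) * (lam⁻¹ * (2*L)) := by
          rw [hLval, mul_assoc]
          congr 2
          ring
  refine main.trans (le_of_eq ?_)
  have hfin : lam⁻¹ * (2*L) = Real.sqrt n * Real.sqrt (2*L) := by
    rw [hlam, Real.sqrt_div (by positivity : (0:ℝ) ≤ 2*L) (n:ℝ), inv_div]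
    have e : Real.sqrt (n:ℝ) / Real.sqrt (2*L) * (2*L)
        = Real.sqrt (n:ℝ) * (2*L / Real.sqrt (2*L)) := by ring
    rw [e, Real.div_sqrt]
  rw [hfin, hL, ← mul_assoc]


end RademacherVectorAux

/-- Lemma 4, case `p ∈ (1,2]`: expected `ℓ_{p*}` norm of a Rademacher average of
vectors bounded in `ℓ_∞`. -/
theorem rademacher_vector_bound_p_in_1_2
    (p : ℝ) (hp1 : 1 < p) (hp2 : p ≤ 2) (m1 n : ℕ) (hm : 0 < m1) (hn : 1 ≤ n)
    (z : Fin n → Fin m1 → ℝ) (hz : ∀ i j, |z i j| ≤ 1) :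
    (n : ℝ)⁻¹ * (((2 : ℝ) ^ n)⁻¹ * ∑ ε : Fin n → Bool,
        (∑ j, |∑ i, (if ε i then (1 : ℝ) else -1) * z i j| ^ (p / (p - 1)))
          ^ ((p - 1) / p)) ≤
      (m1 : ℝ) ^ (1 - 1 / p) / Real.sqrt n *
        min (Real.sqrt (p / (p - 1) - 1)) (Real.sqrt (2 * Real.log (2 * m1))) := by
  
  have hp0 : (0:ℝ) < p := by linarith
  have hpm1 : (0:ℝ) < p - 1 := by linarith
  set q : ℝ := p / (p - 1) with hq
  have hq2 : 2 ≤ q := by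
    rw [hq, le_div_iff₀ hpm1]; linarith
  have hfrac : (p - 1) / p = 1 / q := by
    rw [hq]; field_simp
  have hexp : 1 - 1 / p = 1 / q := by
    rw [hq]; field_simp
  rw [hfrac, hexp]
  have hn0 : (0:ℝ) < (n:ℝ) := by exact_mod_cast hn
  have hsn : (0:ℝ) < Real.sqrt n := Real.sqrt_pos.mpr hn0
  have hA := RademacherVectorAux.branchA q hq2 m1 n hm hn z hz
  have hB := RademacherVectorAux.branchB q hq2 m1 n hm hn z hz
  have hmin : ((2:ℝ)^n)⁻¹ * ∑ ε : Fin n → Bool,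
        (∑ j, |∑ i, (if ε i then (1:ℝ) else -1) * z i j| ^ q) ^ (1/q)
      ≤ (m1:ℝ)^(1/q) * Real.sqrt n *
          min (Real.sqrt (q-1)) (Real.sqrt (2*Real.log (2*(m1:ℝ)))) := by
    rw [mul_min_of_nonneg _ _ (by positivity : (0:ℝ) ≤ (m1:ℝ)^(1/q) * Real.sqrt n)]
    exact le_min hA hB
  have hstep := mul_le_mul_of_nonneg_left hmin (by positivity : (0:ℝ) ≤ (n:ℝ)⁻¹)
  refine hstep.trans (le_of_eq ?_)
  have hself : Real.sqrt n * Real.sqrt n = (n:ℝ) := Real.mul_self_sqrt (le_of_lt hn0)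
  have hr : (n:ℝ)⁻¹ * Real.sqrt n = (Real.sqrt n)⁻¹ := by
    field_simp
    exact Real.sq_sqrt (le_of_lt hn0)
  have hqm1 : q - 1 = p / (p - 1) - 1 := by rw [hq]
  calc (n:ℝ)⁻¹ * ((m1:ℝ)^(1/q) * Real.sqrt n *
          min (Real.sqrt (q-1)) (Real.sqrt (2*Real.log (2*(m1:ℝ)))))
      = ((n:ℝ)⁻¹ * Real.sqrt n) * ((m1:ℝ)^(1/q) *
          min (Real.sqrt (q-1)) (Real.sqrt (2*Real.log (2*(m1:ℝ))))) := by ring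
    _ = (Real.sqrt n)⁻¹ * ((m1:ℝ)^(1/q) *
          min (Real.sqrt (q-1)) (Real.sqrt (2*Real.log (2*(m1:ℝ))))) := by rw [hr]
    _ = (m1:ℝ)^(1/q) / Real.sqrt n *
          min (Real.sqrt (q-1)) (Real.sqrt (2*Real.log (2*(m1:ℝ)))) := by
        rw [div_eq_mul_inv]; ring
end

section
/- Let p ∈ {1} ∪ (2,∞) and let p* satisfy 1/p + 1/p* = 1, with the conventions that p* = ∞, ‖·‖_{p*} is the ℓ_∞ norm, and m_1^{1/p*} = 1 when p = 1. Let z_1, …, z_n ∈ ℝ^{m_1} with ‖z_i‖_∞ ≤ 1 for all i. Then (1/n)·2^{-n} Σ_{ε ∈ {-1,1}^n} ‖Σ_{i=1}^n ε_i z_i‖_{p*} ≤ √(2·log(2m_1)/n) · m_1^{1/p*}. -/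
open scoped BigOperators Classical ENNReal NNReal
open MeasureTheory

/-- MGF bound for a Rademacher sum. -/
lemma mgf_bound (n : ℕ) (lam : ℝ) (a : Fin n → ℝ) (ha : ∀ i, |a i| ≤ 1) :
    ∑ ε : Fin n → Bool, Real.exp (lam * ∑ i, (if ε i then (1:ℝ) else -1) * a i)
      ≤ 2 ^ n * Real.exp (n * lam ^ 2 / 2) := by
  classical
  have key : ∀ ε : Fin n → Bool,
      Real.exp (lam * ∑ i, (if ε i then (1:ℝ) else -1) * a i)
        = ∏ i, Real.exp (lam * ((if ε i then (1:ℝ) else -1) * a i)) := by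
    intro ε
    rw [Finset.mul_sum, Real.exp_sum]
  calc ∑ ε : Fin n → Bool, Real.exp (lam * ∑ i, (if ε i then (1:ℝ) else -1) * a i)
      = ∑ ε : Fin n → Bool, ∏ i, Real.exp (lam * ((if ε i then (1:ℝ) else -1) * a i)) := by
        simp only [key]
    _ = ∏ i, ∑ b : Bool, Real.exp (lam * ((if b then (1:ℝ) else -1) * a i)) := by
        rw [Fintype.prod_sum (fun (i : Fin n) (b : Bool) => Real.exp (lam * ((if b then (1:ℝ) else -1) * a i)))]
    _ ≤ ∏ i : Fin n, 2 * Real.exp (lam ^ 2 / 2) := by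
        apply Finset.prod_le_prod
        · intro i _
          positivity
        · intro i _
          have h1 : ∑ b : Bool, Real.exp (lam * ((if b then (1:ℝ) else -1) * a i))
              = 2 * Real.cosh (lam * a i) := by
            rw [Real.cosh_eq]
            simp only [Fintype.sum_bool, if_true, if_false]
            norm_num
            ring
          rw [h1]
          have h2 : Real.cosh (lam * a i) ≤ Real.exp ((lam * a i) ^ 2 / 2) :=
            Real.cosh_le_exp_half_sq _
          have h3 : (lam * a i) ^ 2 ≤ lam ^ 2 := by
            have := ha i
            have h4 : (a i) ^ 2 ≤ 1 := by
              nlinarith [abs_nonneg (a i), sq_abs (a i)]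
            nlinarith [sq_nonneg lam, sq_nonneg (a i)]
          have := Real.exp_le_exp.2 (by linarith : (lam * a i) ^ 2 / 2 ≤ lam ^ 2 / 2)
          linarith [h2.trans this]
    _ = 2 ^ n * Real.exp (n * lam ^ 2 / 2) := by
        rw [Finset.prod_const, Finset.card_univ, Fintype.card_fin, mul_pow,
          ← Real.exp_nat_mul]
        ring_nf


set_option maxHeartbeats 2000000 in
/-- Lemma 4, case `p = 1` or `p > 2`: expected `ℓ_{p*}` norm of a Rademacher average
of vectors bounded in `ℓ_∞` (with `p* = ∞` and `m₁^{1/p*} = 1` when `p = 1`). -/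
theorem rademacher_vector_bound_p_one_or_gt_two
    (p : ℝ) (hp : p = 1 ∨ 2 < p) (m1 n : ℕ) (hm : 0 < m1) (hn : 1 ≤ n)
    (z : Fin n → Fin m1 → ℝ) (hz : ∀ i j, |z i j| ≤ 1) :
    (n : ℝ)⁻¹ * (((2 : ℝ) ^ n)⁻¹ * ∑ ε : Fin n → Bool,
        dualNorm p (fun j => ∑ i, (if ε i then (1 : ℝ) else -1) * z i j)) ≤
      Real.sqrt (2 * Real.log (2 * m1) / n) * (m1 : ℝ) ^ (1 - 1 / p) := by
  classical
  have hm1 : (1:ℝ) ≤ (m1:ℝ) := by exact_mod_cast hm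
  have hn0 : (0:ℝ) < n := by exact_mod_cast hn
  set L : ℝ := Real.log (2 * m1) with hLdef
  have hL : 0 < L := Real.log_pos (by linarith)
  set lam : ℝ := Real.sqrt (2 * L / n) with hlamdef
  have hlam : 0 < lam := Real.sqrt_pos.2 (by positivity)
  have hlamsq : lam ^ 2 = 2 * L / n := Real.sq_sqrt (by positivity)
  haveI : Nonempty (Fin m1) := ⟨⟨0, hm⟩⟩
  set S : (Fin n → Bool) → Fin m1 → ℝ :=
    fun ε j => ∑ i, (if ε i then (1:ℝ) else -1) * z i j with hSdef
  set M : (Fin n → Bool) → ℝ := fun ε => ⨆ j, |S ε j| with hMdef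
  have hbdd : ∀ ε, BddAbove (Set.range fun j => |S ε j|) :=
    fun ε => (Set.finite_range _).bddAbove
  have hM_le : ∀ ε j, |S ε j| ≤ M ε := fun ε j => le_ciSup (hbdd ε) j
  have hM0 : ∀ ε, 0 ≤ M ε := fun ε => le_trans (abs_nonneg _) (hM_le ε ⟨0, hm⟩)
  -- Step A : dualNorm ≤ m^{1-1/p} * M
  have stepA : ∀ ε, dualNorm p (S ε) ≤ (m1 : ℝ) ^ (1 - 1/p) * M ε := by
    intro ε
    rcases hp with hp1 | hp2
    · subst hp1
      simp only [dualNorm, if_pos rfl]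
      norm_num
      exact le_rfl
    · have hp1 : p ≠ 1 := by linarith
      have hp0 : 0 < p := by linarith
      have hps : 0 < p - 1 := by linarith
      set q : ℝ := p / (p - 1) with hqdef
      have hq0 : 0 < q := by positivity
      simp only [dualNorm, if_neg hp1]
      have h1 : ∑ j, |S ε j| ^ q ≤ (m1 : ℝ) * M ε ^ q := by
        calc ∑ j, |S ε j| ^ q ≤ ∑ _j : Fin m1, M ε ^ q := by
              apply Finset.sum_le_sum
              intro j _
              exact Real.rpow_le_rpow (abs_nonneg _) (hM_le ε j) hq0.le
          _ = (m1 : ℝ) * M ε ^ q := by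
              rw [Finset.sum_const, Finset.card_univ, Fintype.card_fin, nsmul_eq_mul]
      have h2 : (p - 1) / p = 1 / q := by
        rw [hqdef, one_div_div]
      have h3 : (∑ j, |S ε j| ^ q) ^ ((p-1)/p) ≤ ((m1:ℝ) * M ε ^ q) ^ ((p-1)/p) := by
        apply Real.rpow_le_rpow _ h1 (by positivity)
        apply Finset.sum_nonneg
        intro j _
        positivity
      refine h3.trans_eq ?_
      rw [h2, Real.mul_rpow (by positivity) (Real.rpow_nonneg (hM0 ε) q),
        ← Real.rpow_mul (hM0 ε)]
      have hq1 : q * (1/q) = 1 := mul_one_div_cancel hq0.ne'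
      have h4 : (1:ℝ)/q = 1 - 1/p := by
        rw [hqdef, one_div_div]
        field_simp
      rw [hq1, Real.rpow_one, h4]
  -- Step B : pointwise exponential bound on the max
  have stepB : ∀ ε, Real.exp (lam * M ε)
      ≤ ∑ j, (Real.exp (lam * ∑ i, (if ε i then (1:ℝ) else -1) * z i j)
          + Real.exp (lam * ∑ i, (if ε i then (1:ℝ) else -1) * (-(z i j)))) := by
    intro ε
    obtain ⟨j0, hj0⟩ := Finite.exists_max (fun j => |S ε j|)
    have hMle : M ε ≤ |S ε j0| := ciSup_le hj0
    have h1 : Real.exp (lam * M ε) ≤ Real.exp (lam * |S ε j0|) :=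
      Real.exp_le_exp.2 (mul_le_mul_of_nonneg_left hMle hlam.le)
    have hneg : (∑ i, (if ε i then (1:ℝ) else -1) * (-(z i j0))) = -(S ε j0) := by
      simp [hSdef, mul_neg]
    have h2 : Real.exp (lam * |S ε j0|)
        ≤ Real.exp (lam * S ε j0) + Real.exp (lam * -(S ε j0)) := by
      rcases abs_cases (S ε j0) with ⟨h, _⟩ | ⟨h, _⟩
      · rw [h]
        have := Real.exp_pos (lam * -(S ε j0))
        linarith
      · rw [h]
        have := Real.exp_pos (lam * S ε j0)
        linarith
    have h3 : Real.exp (lam * S ε j0) + Real.exp (lam * ∑ i, (if ε i then (1:ℝ) else -1) * (-(z i j0)))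
        ≤ ∑ j, (Real.exp (lam * ∑ i, (if ε i then (1:ℝ) else -1) * z i j)
          + Real.exp (lam * ∑ i, (if ε i then (1:ℝ) else -1) * (-(z i j)))) := by
      apply Finset.single_le_sum (f := fun j => Real.exp (lam * ∑ i, (if ε i then (1:ℝ) else -1) * z i j)
          + Real.exp (lam * ∑ i, (if ε i then (1:ℝ) else -1) * (-(z i j)))) ?_ (Finset.mem_univ j0)
      intro j _
      positivity
    rw [hneg] at h3
    exact (h1.trans h2).trans h3
  -- Step C : Jensen for exp
  have hcard : (Fintype.card (Fin n → Bool) : ℝ) = 2 ^ n := by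
    simp [Fintype.card_fun]
  have hw : ∑ _ε : Fin n → Bool, ((2:ℝ) ^ n)⁻¹ = 1 := by
    rw [Finset.sum_const, Finset.card_univ, nsmul_eq_mul, hcard]
    field_simp
  have jensen : Real.exp (lam * (((2:ℝ) ^ n)⁻¹ * ∑ ε, M ε))
      ≤ ∑ ε, ((2:ℝ) ^ n)⁻¹ * Real.exp (lam * M ε) := by
    have hmain := convexOn_exp.map_sum_le (t := Finset.univ)
      (w := fun _ : Fin n → Bool => ((2:ℝ) ^ n)⁻¹) (p := fun ε => lam * M ε)
      (fun _ _ => by positivity) hw (fun _ _ => Set.mem_univ _)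
    simp only [smul_eq_mul] at hmain
    have harg : ∑ ε : Fin n → Bool, ((2:ℝ) ^ n)⁻¹ * (lam * M ε)
        = lam * (((2:ℝ) ^ n)⁻¹ * ∑ ε, M ε) := by
      rw [Finset.mul_sum, Finset.mul_sum]
      apply Finset.sum_congr rfl
      intro ε _
      ring
    rw [harg] at hmain
    exact hmain
  -- Step D : MGF sum bound
  have stepB2 : ∑ ε, Real.exp (lam * M ε)
      ≤ ∑ ε : Fin n → Bool, ∑ j, (Real.exp (lam * ∑ i, (if ε i then (1:ℝ) else -1) * z i j)
          + Real.exp (lam * ∑ i, (if ε i then (1:ℝ) else -1) * (-(z i j)))) :=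
    Finset.sum_le_sum fun ε _ => stepB ε
  have stepB3 : ∑ ε : Fin n → Bool, ∑ j, (Real.exp (lam * ∑ i, (if ε i then (1:ℝ) else -1) * z i j)
          + Real.exp (lam * ∑ i, (if ε i then (1:ℝ) else -1) * (-(z i j))))
      = ∑ j, ((∑ ε : Fin n → Bool, Real.exp (lam * ∑ i, (if ε i then (1:ℝ) else -1) * z i j))
          + ∑ ε : Fin n → Bool, Real.exp (lam * ∑ i, (if ε i then (1:ℝ) else -1) * (-(z i j)))) := by
    rw [Finset.sum_comm]
    exact Finset.sum_congr rfl fun j _ => Finset.sum_add_distrib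
  have stepB4 : ∑ j : Fin m1, ((∑ ε : Fin n → Bool, Real.exp (lam * ∑ i, (if ε i then (1:ℝ) else -1) * z i j))
          + ∑ ε : Fin n → Bool, Real.exp (lam * ∑ i, (if ε i then (1:ℝ) else -1) * (-(z i j))))
      ≤ ∑ _j : Fin m1, ((2:ℝ) ^ n * Real.exp (n * lam ^ 2 / 2)
            + (2:ℝ) ^ n * Real.exp (n * lam ^ 2 / 2)) := by
    apply Finset.sum_le_sum
    intro j _
    have hb1 := mgf_bound n lam (fun i => z i j) (fun i => hz i j)
    have hb2 := mgf_bound n lam (fun i => -(z i j)) (fun i => by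
      rw [abs_neg]; exact hz i j)
    exact add_le_add hb1 hb2
  have stepB5 : ∑ _j : Fin m1, ((2:ℝ) ^ n * Real.exp (n * lam ^ 2 / 2)
            + (2:ℝ) ^ n * Real.exp (n * lam ^ 2 / 2))
      = 2 * m1 * 2 ^ n * Real.exp (n * lam ^ 2 / 2) := by
    rw [Finset.sum_const, Finset.card_univ, Fintype.card_fin, nsmul_eq_mul]
    ring
  have stepD : ∑ ε, Real.exp (lam * M ε) ≤ 2 * m1 * 2 ^ n * Real.exp (n * lam ^ 2 / 2) :=
    stepB2.trans (le_of_le_of_eq (stepB3 ▸ stepB4) stepB5)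
  -- Combine : bound the average of M
  set Ebar : ℝ := ((2:ℝ) ^ n)⁻¹ * ∑ ε, M ε with hEdef
  have hEbar : lam * Ebar ≤ 2 * L := by
    have h2n : (0:ℝ) < 2 ^ n := by positivity
    have hexp : Real.exp (lam * Ebar) ≤ Real.exp (L + n * lam ^ 2 / 2) := by
      calc Real.exp (lam * Ebar) ≤ ∑ ε, ((2:ℝ) ^ n)⁻¹ * Real.exp (lam * M ε) := jensen
        _ = ((2:ℝ) ^ n)⁻¹ * ∑ ε, Real.exp (lam * M ε) := by rw [Finset.mul_sum]
        _ ≤ ((2:ℝ) ^ n)⁻¹ * (2 * m1 * 2 ^ n * Real.exp (n * lam ^ 2 / 2)) := by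
            apply mul_le_mul_of_nonneg_left stepD (by positivity)
        _ = (2 * m1) * Real.exp (n * lam ^ 2 / 2) := by
            field_simp
        _ = Real.exp (L + n * lam ^ 2 / 2) := by
            rw [Real.exp_add, hLdef, Real.exp_log (by linarith)]
    have := Real.exp_le_exp.1 hexp
    have hnl : (n:ℝ) * lam ^ 2 / 2 = L := by
      rw [hlamsq]
      field_simp
    linarith [this, hnl ▸ this]
  have hEbar2 : (n:ℝ)⁻¹ * Ebar ≤ lam := by
    have h2L : 2 * L = n * lam ^ 2 := by
      rw [hlamsq]; field_simp
    have hE : Ebar ≤ n * lam := by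
      have := hEbar
      rw [h2L] at this
      have hll : (n:ℝ) * lam ^ 2 = (n * lam) * lam := by ring
      nlinarith [hlam]
    calc (n:ℝ)⁻¹ * Ebar ≤ (n:ℝ)⁻¹ * (n * lam) :=
          mul_le_mul_of_nonneg_left hE (by positivity)
      _ = lam := by field_simp
  -- Step E : conclude
  have hma : (0:ℝ) ≤ (m1:ℝ) ^ (1 - 1/p) := Real.rpow_nonneg (by positivity) _
  have h6 : ∑ ε : Fin n → Bool, dualNorm p (fun j => ∑ i, (if ε i then (1:ℝ) else -1) * z i j)
      ≤ (m1:ℝ) ^ (1 - 1/p) * ∑ ε, M ε := by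
    rw [Finset.mul_sum]
    exact Finset.sum_le_sum fun ε _ => stepA ε
  have h9 : (m1:ℝ) ^ (1 - 1/p) * ((n:ℝ)⁻¹ * Ebar) ≤ lam * (m1:ℝ) ^ (1 - 1/p) := by
    rw [mul_comm lam]
    exact mul_le_mul_of_nonneg_left hEbar2 hma
  refine le_trans ?_ h9
  rw [hEdef]
  have heq : (m1:ℝ) ^ (1 - 1/p) * ((n:ℝ)⁻¹ * (((2:ℝ) ^ n)⁻¹ * ∑ ε, M ε))
      = (n:ℝ)⁻¹ * (((2:ℝ) ^ n)⁻¹ * ((m1:ℝ) ^ (1 - 1/p) * ∑ ε, M ε)) := by ring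
  rw [heq]
  apply mul_le_mul_of_nonneg_left _ (by positivity)
  apply mul_le_mul_of_nonneg_left h6 (by positivity)
end

section
/- Let p, q ≥ 1 with p < ∞, let p* satisfy 1/p + 1/p* = 1, and let s_1, s_2 ≥ 1 be integers. Let ε ∈ {-1,+1}^n, let g : ℝ^{m_1} → ℝ^{s_1} be any function, let x_1, …, x_n ∈ ℝ^{m_1}, and suppose B ≥ 0 satisfies |Σ_{i=1}^n ε_i σ(⟨v, g(x_i)⟩)| ≤ B·‖v‖_p for every vector v ∈ ℝ^{s_1}. Then for every matrix V ∈ ℝ^{s_1×s_2}, ‖Σ_{i=1}^n ε_i σ∘(V^T g(x_i))‖_{p*} ≤ s_2^{[1/p* − 1/q]_+} · B · ‖V‖_{p,q}, where [x]_+ = max(x,0) and 1/q = 0 when q = ∞. -/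
open scoped BigOperators Classical ENNReal NNReal
open MeasureTheory

lemma single_le_lp {m : ℕ} (c : Fin m → ℝ) (hc : ∀ j, 0 ≤ c j) {r : ℝ} (hr : 0 < r)
    (j : Fin m) : c j ≤ (∑ i, c i ^ r) ^ (1 / r) := by
  have h1 : c j = (c j ^ r) ^ (1 / r) := by
    rw [← Real.rpow_mul (hc j), mul_one_div_cancel hr.ne', Real.rpow_one]
  rw [h1]
  exact Real.rpow_le_rpow (Real.rpow_nonneg (hc j) r)
    (Finset.single_le_sum (fun i _ => Real.rpow_nonneg (hc i) r) (Finset.mem_univ j))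
    (by positivity)

lemma lp_mono_exp {m : ℕ} (c : Fin m → ℝ) (hc : ∀ j, 0 ≤ c j) {r s : ℝ} (hr : 0 < r)
    (hrs : r ≤ s) : (∑ j, c j ^ s) ^ (1 / s) ≤ (∑ j, c j ^ r) ^ (1 / r) := by
  have hs : 0 < s := hr.trans_le hrs
  have hSr : (0:ℝ) ≤ ∑ i, c i ^ r := Finset.sum_nonneg fun i _ => Real.rpow_nonneg (hc i) r
  have hSs : (0:ℝ) ≤ ∑ i, c i ^ s := Finset.sum_nonneg fun i _ => Real.rpow_nonneg (hc i) s
  set N : ℝ := (∑ i, c i ^ r) ^ (1 / r) with hN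
  have hN0 : 0 ≤ N := Real.rpow_nonneg hSr _
  have hNr : (∑ i, c i ^ r) = N ^ r := by
    rw [hN, ← Real.rpow_mul hSr, one_div_mul_cancel hr.ne', Real.rpow_one]
  have e : r + (s - r) = s := by ring
  have key : ∑ j, c j ^ s ≤ N ^ s := by
    have h1 : ∀ j : Fin m, c j ^ s ≤ c j ^ r * N ^ (s - r) := by
      intro j
      have hadd := Real.rpow_add' (hc j) (show r + (s - r) ≠ 0 by rw [e]; exact hs.ne')
      rw [e] at hadd
      rw [hadd]
      exact mul_le_mul_of_nonneg_left
        (Real.rpow_le_rpow (hc j) (single_le_lp c hc hr j) (by linarith))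
        (Real.rpow_nonneg (hc j) r)
    have hadd2 := Real.rpow_add' hN0 (show r + (s - r) ≠ 0 by rw [e]; exact hs.ne')
    rw [e] at hadd2
    calc ∑ j, c j ^ s ≤ ∑ j, c j ^ r * N ^ (s - r) := Finset.sum_le_sum fun j _ => h1 j
      _ = (∑ j, c j ^ r) * N ^ (s - r) := by rw [← Finset.sum_mul]
      _ = N ^ r * N ^ (s - r) := by rw [hNr]
      _ = N ^ s := by rw [← hadd2]
  calc (∑ j, c j ^ s) ^ (1 / s) ≤ (N ^ s) ^ (1/s) :=
        Real.rpow_le_rpow hSs key (by positivity)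
    _ = N := by rw [← Real.rpow_mul hN0, mul_one_div_cancel hs.ne', Real.rpow_one]

lemma lp_le_card_mul_lq {m : ℕ} (hm : 0 < m) (c : Fin m → ℝ) (hc : ∀ j, 0 ≤ c j)
    {r s : ℝ} (hr : 0 < r) (hrs : r ≤ s) :
    (∑ j, c j ^ r) ^ (1 / r) ≤ (m : ℝ) ^ (1 / r - 1 / s) * (∑ j, c j ^ s) ^ (1 / s) := by
  have hs : 0 < s := hr.trans_le hrs
  have hm' : (0:ℝ) < m := by exact_mod_cast hm
  have hp1 : 1 ≤ s / r := (one_le_div hr).mpr hrs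
  have hSr : (0:ℝ) ≤ ∑ i, c i ^ r := Finset.sum_nonneg fun i _ => Real.rpow_nonneg (hc i) r
  have hSs : (0:ℝ) ≤ ∑ i, c i ^ s := Finset.sum_nonneg fun i _ => Real.rpow_nonneg (hc i) s
  have hw1 : ∑ _i : Fin m, (m:ℝ)⁻¹ = 1 := by
    rw [Finset.sum_const, Finset.card_univ, Fintype.card_fin, nsmul_eq_mul,
      mul_inv_cancel₀ hm'.ne']
  have ham := Real.arith_mean_le_rpow_mean (Finset.univ : Finset (Fin m))
    (fun _ => (m : ℝ)⁻¹) (fun j => c j ^ r)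
    (fun i _ => by positivity) hw1 (fun i _ => Real.rpow_nonneg (hc i) r) hp1
  have hcs : ∀ j : Fin m, (c j ^ r) ^ (s / r) = c j ^ s := by
    intro j
    rw [← Real.rpow_mul (hc j), mul_div_cancel₀ s hr.ne']
  simp only [hcs, one_div_div] at ham
  rw [← Finset.mul_sum, ← Finset.mul_sum] at ham
  have h2 : (∑ j, c j ^ r) ≤ (m:ℝ) * ((m:ℝ)⁻¹ * ∑ j, c j ^ s) ^ (r / s) := by
    calc (∑ j, c j ^ r) = (m:ℝ) * ((m:ℝ)⁻¹ * ∑ j, c j ^ r) := by field_simp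
      _ ≤ (m:ℝ) * ((m:ℝ)⁻¹ * ∑ j, c j ^ s) ^ (r / s) :=
          mul_le_mul_of_nonneg_left ham (le_of_lt hm')
  have hmixed : (0:ℝ) ≤ (m:ℝ)⁻¹ * ∑ j, c j ^ s := mul_nonneg (inv_nonneg.2 hm'.le) hSs
  have h3 : (∑ j, c j ^ r) ^ (1 / r) ≤
      ((m:ℝ) * ((m:ℝ)⁻¹ * ∑ j, c j ^ s) ^ (r / s)) ^ (1 / r) :=
    Real.rpow_le_rpow hSr h2 (by positivity)
  refine h3.trans (le_of_eq ?_)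
  have e1 : r / s * (1 / r) = 1 / s := by field_simp
  rw [Real.mul_rpow hm'.le (Real.rpow_nonneg hmixed _), ← Real.rpow_mul hmixed, e1,
    Real.mul_rpow (inv_nonneg.2 hm'.le) hSs, Real.inv_rpow hm'.le,
    ← Real.rpow_neg hm'.le, ← mul_assoc, ← Real.rpow_add hm',
    show 1/r + -(1/s) = 1/r - 1/s by ring]

lemma lp_le_card_mul_sup {m : ℕ} (hm : 0 < m) (c : Fin m → ℝ) (hc : ∀ j, 0 ≤ c j)
    {r : ℝ} (hr : 0 < r) :
    (∑ j, c j ^ r) ^ (1 / r) ≤ (m : ℝ) ^ (1 / r) * ⨆ j, c j := by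
  haveI : Nonempty (Fin m) := Fin.pos_iff_nonempty.mp hm
  have hbdd := Set.Finite.bddAbove (Set.finite_range c)
  have hsup0 : 0 ≤ ⨆ j, c j :=
    le_ciSup_of_le hbdd (Classical.arbitrary _) (hc _)
  have hle : ∀ j, c j ≤ ⨆ j, c j := fun j => le_ciSup hbdd j
  have hSr : (0:ℝ) ≤ ∑ i, c i ^ r := Finset.sum_nonneg fun i _ => Real.rpow_nonneg (hc i) r
  have key : ∑ j, c j ^ r ≤ (m:ℝ) * (⨆ j, c j) ^ r := by
    calc ∑ j, c j ^ r ≤ ∑ _j : Fin m, (⨆ j, c j) ^ r :=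
          Finset.sum_le_sum fun j _ => Real.rpow_le_rpow (hc j) (hle j) hr.le
      _ = (m:ℝ) * (⨆ j, c j) ^ r := by
          rw [Finset.sum_const, Finset.card_univ, Fintype.card_fin, nsmul_eq_mul]
  calc (∑ j, c j ^ r) ^ (1/r) ≤ ((m:ℝ) * (⨆ j, c j) ^ r) ^ (1/r) :=
        Real.rpow_le_rpow hSr key (by positivity)
    _ = (m:ℝ)^(1/r) * ⨆ j, c j := by
        rw [Real.mul_rpow (Nat.cast_nonneg m) (Real.rpow_nonneg hsup0 r),
          ← Real.rpow_mul hsup0, mul_one_div_cancel hr.ne', Real.rpow_one]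

lemma step1 {m : ℕ} (B : ℝ) (hB : 0 ≤ B) (a c : Fin m → ℝ) (hc : ∀ j, 0 ≤ c j)
    (hac : ∀ j, |a j| ≤ B * c j) {t : ℝ} (ht : 0 < t) :
    (∑ j, |a j| ^ t) ^ (1 / t) ≤ B * (∑ j, c j ^ t) ^ (1 / t) := by
  have hSc : (0:ℝ) ≤ ∑ j, c j ^ t := Finset.sum_nonneg fun j _ => Real.rpow_nonneg (hc j) t
  have hSa : (0:ℝ) ≤ ∑ j, |a j| ^ t :=
    Finset.sum_nonneg fun j _ => Real.rpow_nonneg (abs_nonneg _) t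
  calc (∑ j, |a j| ^ t) ^ (1/t) ≤ (∑ j, (B * c j) ^ t) ^ (1/t) :=
        Real.rpow_le_rpow hSa
          (Finset.sum_le_sum fun j _ => Real.rpow_le_rpow (abs_nonneg _) (hac j) ht.le)
          (by positivity)
    _ = B * (∑ j, c j ^ t) ^ (1/t) := by
        rw [show (∑ j, (B * c j) ^ t) = B ^ t * ∑ j, c j ^ t from by
            rw [Finset.mul_sum]; exact Finset.sum_congr rfl fun j _ => Real.mul_rpow hB (hc j),
          Real.mul_rpow (Real.rpow_nonneg hB t) hSc, ← Real.rpow_mul hB,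
          mul_one_div_cancel ht.ne', Real.rpow_one]

/-- Lemma 5: a column-wise bound for a signed sum of ReLU outputs upgrades to a
bound in `ℓ_{p*}` norm with the `L_{p,q}` matrix norm, at the price of a factor
`s₂^{[1/p* - 1/q]_+}`. -/
theorem relu_matrix_dual_norm_bound
    (p : ℝ) (hp : 1 ≤ p) (q : ℝ≥0∞) (hq : 1 ≤ q)
    (s1 s2 m1 n : ℕ) (hs1 : 1 ≤ s1) (hs2 : 1 ≤ s2)
    (ε : Fin n → ℝ) (hε : ∀ i, ε i = 1 ∨ ε i = -1)
    (g : (Fin m1 → ℝ) → Fin s1 → ℝ) (x : Fin n → Fin m1 → ℝ)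
    (B : ℝ) (hB : 0 ≤ B)
    (hcol : ∀ v : Fin s1 → ℝ,
      |∑ i, ε i * relu (∑ j, v j * g (x i) j)| ≤ B * (∑ j, |v j| ^ p) ^ (1 / p)) :
    ∀ V : Matrix (Fin s1) (Fin s2) ℝ,
      dualNorm p (fun j2 : Fin s2 => ∑ i, ε i * relu (∑ j, V j j2 * g (x i) j)) ≤
        (s2 : ℝ) ^ max ((1 - 1 / p) - qInv q) 0 * B * lpqNorm p q V := by
  intro V
  have hp0 : (0:ℝ) < p := lt_of_lt_of_le one_pos hp
  have hs2pos : 0 < s2 := hs2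
  haveI : Nonempty (Fin s2) := Fin.pos_iff_nonempty.mp hs2pos
  set a : Fin s2 → ℝ := fun j2 => ∑ i, ε i * relu (∑ j, V j j2 * g (x i) j) with ha
  set c : Fin s2 → ℝ := fun j2 => (∑ j, |V j j2| ^ p) ^ (1 / p) with hcdef
  have hc0 : ∀ j2, 0 ≤ c j2 := fun j2 => Real.rpow_nonneg
    (Finset.sum_nonneg fun j _ => Real.rpow_nonneg (abs_nonneg _) p) _
  have hac : ∀ j2, |a j2| ≤ B * c j2 := fun j2 => hcol fun j => V j j2
  have hqR1 : q ≠ ⊤ → 1 ≤ q.toReal := fun hqt => by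
    have h := ENNReal.toReal_mono hqt hq
    simpa using h
  have hqinv0 : 0 ≤ qInv q := by
    rw [qInv]; split
    · exact le_refl 0
    · positivity
  have hlpq_fin : ∀ _hqt : q ≠ ⊤,
      lpqNorm p q V = (∑ j2, c j2 ^ q.toReal) ^ (1 / q.toReal) := by
    intro hqt
    rw [lpqNorm, if_neg hqt]
    congr 1
    refine Finset.sum_congr rfl fun j2 _ => ?_
    have hS : (0:ℝ) ≤ ∑ i, |V i j2| ^ p :=
      Finset.sum_nonneg fun i _ => Real.rpow_nonneg (abs_nonneg _) p
    rw [show q.toReal / p = 1/p * q.toReal from by ring, Real.rpow_mul hS]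
  by_cases hp1 : p = 1
  · subst hp1
    rw [dualNorm, if_pos rfl,
      show max ((1 - 1/(1:ℝ)) - qInv q) 0 = 0 from max_eq_right (by simpa using hqinv0),
      Real.rpow_zero, one_mul]
    refine ciSup_le fun j2 => ?_
    refine (hac j2).trans (mul_le_mul_of_nonneg_left ?_ hB)
    by_cases hqt : q = ⊤
    · subst hqt
      rw [lpqNorm, if_pos rfl]
      exact le_ciSup (Set.Finite.bddAbove (Set.finite_range _)) j2
    · rw [hlpq_fin hqt]
      exact single_le_lp c hc0 (lt_of_lt_of_le one_pos (hqR1 hqt)) j2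
  · have hp1' : 1 < p := lt_of_le_of_ne hp (Ne.symm hp1)
    have hpm : (0:ℝ) < p - 1 := by linarith
    have ht0 : (0:ℝ) < p / (p - 1) := div_pos hp0 hpm
    have hinv : 1 / (p / (p - 1)) = 1 - 1/p := by field_simp
    have hexp : (p - 1) / p = 1 / (p / (p - 1)) := by field_simp
    rw [dualNorm, if_neg hp1, hexp]
    have h1 := step1 B hB a c hc0 hac ht0
    by_cases hqt : q = ⊤
    · subst hqt
      rw [lpqNorm, if_pos rfl]
      have hE : max ((1 - 1/p) - qInv ⊤) 0 = 1 / (p / (p - 1)) := by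
        rw [qInv, if_pos rfl, sub_zero, hinv]
        refine max_eq_left ?_
        have h' : 1/p ≤ 1 := by rw [div_le_one hp0]; exact hp
        linarith
      rw [hE]
      have h2 := lp_le_card_mul_sup hs2pos c hc0 ht0
      calc (∑ j, |a j| ^ (p/(p-1))) ^ (1/(p/(p-1)))
          ≤ B * (∑ j, c j ^ (p/(p-1))) ^ (1/(p/(p-1))) := h1
        _ ≤ B * ((s2:ℝ) ^ (1/(p/(p-1))) * ⨆ j, c j) := mul_le_mul_of_nonneg_left h2 hB
        _ = (s2:ℝ) ^ (1/(p/(p-1))) * B * ⨆ j, c j := by ring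
    · have hQ1 : 1 ≤ q.toReal := hqR1 hqt
      have hQ0 : (0:ℝ) < q.toReal := lt_of_lt_of_le one_pos hQ1
      have hqinv : qInv q = 1 / q.toReal := by rw [qInv, if_neg hqt]
      rw [hlpq_fin hqt]
      by_cases hcase : p / (p - 1) ≤ q.toReal
      · have hE : max ((1 - 1/p) - qInv q) 0 = 1/(p/(p-1)) - 1/q.toReal := by
          rw [hqinv, ← hinv]
          exact max_eq_left (by
            have := one_div_le_one_div_of_le ht0 hcase
            linarith)
        rw [hE]
        have h2 := lp_le_card_mul_lq hs2pos c hc0 ht0 hcase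
        calc (∑ j, |a j| ^ (p/(p-1))) ^ (1/(p/(p-1)))
            ≤ B * (∑ j, c j ^ (p/(p-1))) ^ (1/(p/(p-1))) := h1
          _ ≤ B * ((s2:ℝ) ^ (1/(p/(p-1)) - 1/q.toReal) *
                (∑ j, c j ^ q.toReal) ^ (1/q.toReal)) := mul_le_mul_of_nonneg_left h2 hB
          _ = (s2:ℝ) ^ (1/(p/(p-1)) - 1/q.toReal) * B *
                (∑ j, c j ^ q.toReal) ^ (1/q.toReal) := by ring
      · have hlt : q.toReal < p / (p - 1) := not_le.mp hcase
        have hE : max ((1 - 1/p) - qInv q) 0 = 0 := by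
          rw [hqinv, ← hinv]
          exact max_eq_right (by
            have := one_div_le_one_div_of_le hQ0 hlt.le
            linarith)
        rw [hE, Real.rpow_zero, one_mul]
        have h2 := lp_mono_exp c hc0 hQ0 hlt.le
        calc (∑ j, |a j| ^ (p/(p-1))) ^ (1/(p/(p-1)))
            ≤ B * (∑ j, c j ^ (p/(p-1))) ^ (1/(p/(p-1))) := h1
          _ ≤ B * (∑ j, c j ^ q.toReal) ^ (1/q.toReal) := mul_le_mul_of_nonneg_left h2 hB
end
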